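/- arXiv:2605.20070 — 3 statements merged into one kernel-verified Lean document; each statement's English description precedes it below -/
import Mathlib

section
/- Let G be a graph with Edmonds–Gallai decomposition (D(G), A(G), C(G)), and form the bipartite graph G' with parts A(G) and the set D̃ of contracted components of G[D(G)], with an edge between a ∈ A(G) and component z whenever a has a neighbor in z. Given any fractional perfect matching on the A(G)-side of G' (each a ∈ A(G) distributes total weight 1 among incident edges, each component receives total weight at most 1), there exists a probability distribution over maximum matchings of G whose edge-marginals between A(G) and the components agree with the given fractional values. -/
/-- `M` is a maximum matching of `G` (a matching covering the most vertices). -/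
def IsMaxMatching {V : Type*} (G : SimpleGraph V) (M : G.Subgraph) : Prop :=
  M.IsMatching ∧ ∀ N : G.Subgraph, N.IsMatching → N.support.ncard ≤ M.support.ncard

/-- `D(G)`: the set of vertices missed by at least one maximum matching of `G`. -/
def Dset {V : Type*} (G : SimpleGraph V) : Set V :=
  {v | ∃ M : G.Subgraph, IsMaxMatching G M ∧ v ∉ M.support}

/-- `A(G)`: vertices outside `D(G)` adjacent to a vertex of `D(G)`. -/
def Aset {V : Type*} (G : SimpleGraph V) : Set V :=
  {v | v ∉ Dset G ∧ ∃ u ∈ Dset G, G.Adj v u}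

/-- `M` matches the vertex `a` into the component `z` of `G[D(G)]`. -/
def MatchesInto {V : Type*} (G : SimpleGraph V) (M : G.Subgraph) (a : V)
    (z : (G.induce (Dset G)).ConnectedComponent) : Prop :=
  ∃ d : Dset G, (G.induce (Dset G)).connectedComponentMk d = z ∧ M.Adj a ↑d

open Classical

set_option linter.unusedSectionVars false

namespace GE

variable {V : Type*} [Fintype V] {G : SimpleGraph V}

structure IM (G : SimpleGraph V) where
  f : V → V
  inv : Function.Involutive f
  adj : ∀ v, f v ≠ v → G.Adj v (f v)

namespace IM

def supp (M : IM G) : Set V := {v | M.f v ≠ v}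

lemma mem_supp {M : IM G} {v : V} : v ∈ M.supp ↔ M.f v ≠ v := Iff.rfl

lemma f_mem_supp (M : IM G) {v : V} (h : v ∈ M.supp) : M.f v ∈ M.supp := by
  simp only [mem_supp] at *
  rw [M.inv v]
  exact fun e => h e.symm

def toSub (M : IM G) : G.Subgraph where
  verts := M.supp
  Adj x y := x ≠ y ∧ M.f x = y
  adj_sub := by
    rintro x y ⟨hxy, rfl⟩
    exact M.adj x (fun h => hxy h.symm)
  edge_vert := by
    rintro x y ⟨hxy, rfl⟩
    exact fun h => hxy h.symm
  symm := by
    constructor; rintro x y ⟨hxy, rfl⟩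
    exact ⟨hxy.symm, by rw [M.inv]⟩

lemma toSub_isMatching (M : IM G) : M.toSub.IsMatching := by
  intro v hv
  refine ⟨M.f v, ⟨fun h => hv h.symm, rfl⟩, ?_⟩
  rintro y ⟨h1, rfl⟩
  rfl

lemma toSub_support (M : IM G) : M.toSub.support = M.supp := by
  rw [(M.toSub_isMatching).support_eq_verts]; rfl

lemma toSub_adj {M : IM G} {x y : V} : M.toSub.Adj x y ↔ x ≠ y ∧ M.f x = y := Iff.rfl

noncomputable def ofSub (M : G.Subgraph) (hM : M.IsMatching) : IM G where
  f v := if h : v ∈ M.verts then (hM h).choose else v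
  inv := by
    intro v
    by_cases h : v ∈ M.verts
    · have hadj : M.Adj v (hM h).choose := by exact (hM h).choose_spec.1
      have h2 : (hM h).choose ∈ M.verts := M.edge_vert hadj.symm
      simp only [h, dif_pos, h2]
      exact (by exact (hM h2).choose_spec.2 v hadj.symm : v = (hM h2).choose).symm
    · simp [h]
  adj := by
    intro v hv
    by_cases h : v ∈ M.verts
    · simp only [h, dif_pos] at hv ⊢
      exact M.adj_sub (by exact (hM h).choose_spec.1)
    · simp [h] at hv

lemma ofSub_supp (M : G.Subgraph) (hM : M.IsMatching) : (ofSub M hM).supp = M.support := by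
  ext v
  simp only [mem_supp, ofSub]
  constructor
  · intro hv
    by_cases h : v ∈ M.verts
    · simp only [h, dif_pos] at hv
      exact M.mem_support.2 ⟨_, by exact (hM h).choose_spec.1⟩
    · simp [h] at hv
  · intro hv
    obtain ⟨w, hw⟩ := M.mem_support.1 hv
    have h : v ∈ M.verts := M.edge_vert hw
    simp only [h, dif_pos]
    intro heq
    have hadj : M.Adj v (hM h).choose := by exact (hM h).choose_spec.1
    rw [heq] at hadj
    exact (M.adj_sub hadj).ne rfl

def IsMax (M : IM G) : Prop := ∀ N : IM G, N.supp.ncard ≤ M.supp.ncard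

def empty (G : SimpleGraph V) : IM G := ⟨id, fun _ => rfl, fun _ h => absurd rfl h⟩

lemma supp_ncard_le (M : IM G) : M.supp.ncard ≤ Fintype.card V := by
  have := Set.ncard_le_ncard (Set.subset_univ M.supp) Set.finite_univ
  simpa [Set.ncard_univ] using this

lemma exists_isMax (G : SimpleGraph V) : ∃ M : IM G, IsMax M := by
  have hbdd : BddAbove {n | ∃ M : IM G, M.supp.ncard = n} :=
    ⟨Fintype.card V, by rintro n ⟨M, rfl⟩; exact supp_ncard_le M⟩
  have hmem := Nat.sSup_mem (s := {n | ∃ M : IM G, M.supp.ncard = n})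
    ⟨0, empty G, by simp [supp, empty]⟩ hbdd
  obtain ⟨M, hMn⟩ := hmem
  exact ⟨M, fun N => hMn.symm ▸ le_csSup hbdd ⟨N, rfl⟩⟩

/-- translation: max functional matchings give max matchings. -/
lemma isMaxMatching_toSub {M : IM G} (hM : IsMax M) : IsMaxMatching G M.toSub := by
  refine ⟨M.toSub_isMatching, fun N hN => ?_⟩
  rw [toSub_support, ← ofSub_supp N hN]
  exact hM _

lemma isMax_ofSub {M : G.Subgraph} (hM : IsMaxMatching G M) : IsMax (ofSub M hM.1) := by
  intro N
  rw [ofSub_supp, ← toSub_support N]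
  exact hM.2 _ N.toSub_isMatching

lemma mem_Dset_iff {v : V} : v ∈ Dset G ↔ ∃ M : IM G, IsMax M ∧ M.f v = v := by
  constructor
  · rintro ⟨M, hM, hv⟩
    refine ⟨ofSub M hM.1, isMax_ofSub hM, ?_⟩
    by_contra h
    exact hv ((ofSub_supp M hM.1) ▸ (mem_supp.2 h))
  · rintro ⟨M, hM, hv⟩
    refine ⟨M.toSub, isMaxMatching_toSub hM, ?_⟩
    rw [toSub_support]
    exact fun h => mem_supp.1 h hv

lemma not_mem_Dset {a : V} (ha : a ∉ Dset G) {M : IM G} (hM : IsMax M) : M.f a ≠ a :=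
  fun h => ha (mem_Dset_iff.2 ⟨M, hM, h⟩)

lemma supp_even (M : IM G) : Even M.supp.ncard := by

  have h := M.toSub_isMatching.even_card
  have he : M.supp.ncard = M.toSub.verts.toFinset.card := Set.ncard_eq_toFinset_card' _
  rw [he]
  exact h



/-! ### Alternating walks -/

/-- The alternating walk from `a`, starting with an `N`-step. -/
def seq (M N : IM G) (a : V) : ℕ → V
  | 0 => a
  | (i+1) => if Even i then N.f (seq M N a i) else M.f (seq M N a i)

section Walk

variable (M N : IM G) (a : V)

lemma seq_zero : seq M N a 0 = a := rfl

lemma seq_succ_even {i : ℕ} (h : Even i) : seq M N a (i+1) = N.f (seq M N a i) := by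
  simp [seq, h]

lemma seq_succ_odd {i : ℕ} (h : ¬ Even i) : seq M N a (i+1) = M.f (seq M N a i) := by
  simp [seq, h]

variable {M N a}

lemma seq_inj (ha : M.f a = a) :
    ∀ j, (∀ k, k < j → seq M N a (k+1) ≠ seq M N a k) →
      ∀ i, i < j → seq M N a i ≠ seq M N a j := by
  intro j
  induction j using Nat.strong_induction_on with
  | _ j IH =>
    intro hstop i hij heq
    -- exclude j = i + 1
    rcases Nat.lt_or_ge (i+1) j with hj2 | hj1
    swap
    · -- j ≤ i + 1, so j = i+1
      have : j = i + 1 := le_antisymm hj1 (Nat.succ_le_of_lt hij)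
      subst this
      exact hstop i hij heq.symm
    -- j = t + 1
    obtain ⟨t, rfl⟩ : ∃ t, j = t + 1 := ⟨j - 1, (Nat.succ_pred_eq_of_pos (by omega)).symm⟩
    have hit : i < t := by omega
    have hstop' : ∀ k, k < t → seq M N a (k+1) ≠ seq M N a k :=
      fun k hk => hstop k (by omega)
    by_cases ht : Even t
    · -- x (t+1) = N.f (x t), so x t = N.f (x i)
      have h1 : seq M N a t = N.f (seq M N a i) := by
        have h := seq_succ_even M N a ht
        rw [← heq] at h
        rw [h, N.inv]
      rcases Nat.eq_zero_or_pos i with rfl | hi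
      · -- x t = N.f a = x 1
        have h2 : seq M N a t = seq M N a 1 := by
          rw [h1]
          exact (seq_succ_even M N a Even.zero).symm
        have h3 : 1 < t := by
          by_contra h
          have : t = 1 := by omega
          rw [this] at ht
          simp at ht
        exact IH t (by omega) hstop' 1 h3 h2.symm
      · rcases Nat.even_or_odd i with hie | hio
        · -- departure from i is N : x (i+1) = N.f (x i) = x t
          have h2 : seq M N a (i+1) = seq M N a t := by
            rw [seq_succ_even M N a hie, h1]
          rcases Nat.lt_or_ge (i+1) t with h | h
          · exact IH t (by omega) hstop' (i+1) h h2
          · have : i + 1 = t := by omega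
            subst this
            exact (Nat.even_add_one.mp ht) hie
        · -- arrival at i was N : x i = N.f (x (i-1))
          obtain ⟨k, rfl⟩ : ∃ k, i = k + 1 := ⟨i - 1, by omega⟩
          have hke : Even k := Nat.not_odd_iff_even.mp (Nat.odd_add_one.mp hio)
          have h2 : seq M N a k = seq M N a t := by
            have h3 := seq_succ_even M N a hke
            rw [h1, h3, N.inv]
          exact IH t (by omega) hstop' k (by omega) h2
    · -- x (t+1) = M.f (x t), so x t = M.f (x i)
      have h1 : seq M N a t = M.f (seq M N a i) := by
        have h := seq_succ_odd M N a ht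
        rw [← heq] at h
        rw [h, M.inv]
      rcases Nat.eq_zero_or_pos i with rfl | hi
      · -- x t = M.f a = a = x 0
        have h2 : seq M N a t = seq M N a 0 := by rw [h1, seq_zero, ha]
        exact IH t (by omega) hstop' 0 (by omega) h2.symm
      · rcases Nat.even_or_odd i with hie | hio
        · -- arrival at i was M (i-1 odd) : x (i-1) = M.f (x i)
          obtain ⟨k, rfl⟩ : ∃ k, i = k + 1 := ⟨i - 1, by omega⟩
          have hko : ¬ Even k := by simpa [Nat.even_add_one] using hie
          have h2 : seq M N a k = seq M N a t := by
            have h3 := seq_succ_odd M N a hko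
            rw [h1, h3, M.inv]
          exact IH t (by omega) hstop' k (by omega) h2
        · -- departure from i is M : x (i+1) = M.f (x i) = x t
          have h2 : seq M N a (i+1) = seq M N a t := by
            rw [seq_succ_odd M N a (Nat.not_even_iff_odd.mpr hio), h1]
          rcases Nat.lt_or_ge (i+1) t with h | h
          · exact IH t (by omega) hstop' (i+1) h h2
          · have : i + 1 = t := by omega
            subst this
            exact ht (Nat.even_add_one.mpr (Nat.not_even_iff_odd.mpr hio))



lemma exists_stop (M N : IM G) (a : V) (ha : M.f a = a) :
    ∃ i, seq M N a (i+1) = seq M N a i := by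
  by_contra h
  push_neg at h
  obtain ⟨i, j, hne, heq⟩ := Finite.exists_ne_map_eq_of_infinite (seq M N a)
  rcases hne.lt_or_gt with hij | hij
  · exact seq_inj ha j (fun k _ => h k) i hij heq
  · exact seq_inj ha i (fun k _ => h k) j hij heq.symm

/-- Flip a matching along a set closed under both matchings. -/
noncomputable def flip (M N : IM G) (W : Set V) (hM : ∀ v ∈ W, M.f v ∈ W) (hN : ∀ v ∈ W, N.f v ∈ W) :
    IM G where
  f v := if v ∈ W then N.f v else M.f v
  inv := by
    intro v
    dsimp only
    by_cases h : v ∈ W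
    · rw [if_pos h, if_pos (hN v h), N.inv]
    · have h2 : M.f v ∉ W := fun hc => h (by rw [← M.inv v]; exact hM _ hc)
      rw [if_neg h, if_neg h2, M.inv]
  adj := by
    intro v hv
    by_cases h : v ∈ W
    · rw [if_pos h] at hv ⊢
      exact N.adj v hv
    · rw [if_neg h] at hv ⊢
      exact M.adj v hv

lemma flip_supp (M N : IM G) (W : Set V) (hM : ∀ v ∈ W, M.f v ∈ W)
    (hN : ∀ v ∈ W, N.f v ∈ W) :
    (flip M N W hM hN).supp = (W ∩ N.supp) ∪ (Wᶜ ∩ M.supp) := by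
  ext v
  by_cases h : v ∈ W <;> simp [flip, supp, h]

/-- The master walk lemma: flipping the maximal alternating walk from an
`M`-exposed, `N`-covered vertex `a`. -/
theorem walk_main (M N : IM G) (a : V) (ha : M.f a = a) (hna : N.f a ≠ a) :
    ∃ (w : V) (P Q : IM G), w ≠ a ∧ G.Reachable a w ∧
      ((M.f w = w ∧ N.f w ≠ w ∧ P.supp = M.supp ∪ {a, w} ∧ Q.supp = N.supp \ {a, w}) ∨
       (N.f w = w ∧ M.f w ≠ w ∧ P.supp = (M.supp \ {w}) ∪ {a} ∧
         Q.supp = (N.supp \ {a}) ∪ {w})) := by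
  have hex := exists_stop M N a ha
  set s := Nat.find hex with hsdef
  have hs : seq M N a (s+1) = seq M N a s := Nat.find_spec hex
  have hmin : ∀ k, k < s → seq M N a (k+1) ≠ seq M N a k := fun k hk => Nat.find_min hex hk
  have hs1 : 1 ≤ s := by
    rcases Nat.eq_zero_or_pos s with h0 | h
    · exfalso
      rw [h0] at hs
      rw [seq_succ_even M N a Even.zero, seq_zero] at hs
      exact hna hs
    · exact h
  have inj' : ∀ i j, i < j → j ≤ s → seq M N a i ≠ seq M N a j :=
    fun i j hij hjs => seq_inj ha j (fun k hk => hmin k (lt_of_lt_of_le hk hjs)) i hij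
  obtain ⟨w, hwdef⟩ : ∃ w, seq M N a s = w := ⟨_, rfl⟩
  obtain ⟨W, hWdef⟩ : ∃ W : Set V, {v | ∃ k, k ≤ s ∧ seq M N a k = v} = W := ⟨_, rfl⟩
  have hmemW : ∀ v, v ∈ W ↔ ∃ k, k ≤ s ∧ seq M N a k = v := fun v => by rw [← hWdef]; rfl
  have haW : a ∈ W := (hmemW a).2 ⟨0, Nat.zero_le _, rfl⟩
  have hwW : w ∈ W := (hmemW w).2 ⟨s, le_refl _, hwdef⟩
  have hwa : w ≠ a := fun h =>
    inj' 0 s hs1 (le_refl _) ((seq_zero M N a).trans (h.symm.trans hwdef.symm))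
  have hxW : ∀ k, k ≤ s + 1 → seq M N a k ∈ W := by
    intro k hk
    rcases Nat.lt_or_ge k (s+1) with h | h
    · exact (hmemW _).2 ⟨k, by omega, rfl⟩
    · have hk2 : k = s + 1 := by omega
      rw [hk2, hs, hwdef]
      exact hwW
  -- closure of W under both involutions
  have hclos : ∀ v ∈ W, M.f v ∈ W ∧ N.f v ∈ W := by
    intro v hv
    obtain ⟨k, hk, rfl⟩ := (hmemW v).1 hv
    rcases Nat.eq_zero_or_pos k with rfl | hkpos
    · constructor
      · rw [seq_zero, ha]; exact haW
      · have h1 : N.f (seq M N a 0) = seq M N a 1 := (seq_succ_even M N a Even.zero).symm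
        rw [h1]; exact hxW 1 (by omega)
    · obtain ⟨t, rfl⟩ : ∃ t, k = t + 1 := ⟨k - 1, by omega⟩
      by_cases ht : Even t
      · have ht1 : ¬ Even (t+1) := by simp [Nat.even_add_one, ht]
        have harr : N.f (seq M N a (t+1)) = seq M N a t := by
          rw [seq_succ_even M N a ht, N.inv]
        have hdep : M.f (seq M N a (t+1)) = seq M N a (t+1+1) :=
          (seq_succ_odd M N a ht1).symm
        constructor
        · rw [hdep]; exact hxW (t+1+1) (by omega)
        · rw [harr]; exact (hmemW _).2 ⟨t, by omega, rfl⟩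
      · have ht1 : Even (t+1) := Nat.even_add_one.mpr ht
        have harr : M.f (seq M N a (t+1)) = seq M N a t := by
          rw [seq_succ_odd M N a ht, M.inv]
        have hdep : N.f (seq M N a (t+1)) = seq M N a (t+1+1) :=
          (seq_succ_even M N a ht1).symm
        constructor
        · rw [harr]; exact (hmemW _).2 ⟨t, by omega, rfl⟩
        · rw [hdep]; exact hxW (t+1+1) (by omega)
  have hMc : ∀ v ∈ W, M.f v ∈ W := fun v hv => (hclos v hv).1
  have hNc : ∀ v ∈ W, N.f v ∈ W := fun v hv => (hclos v hv).2
  -- interior vertices are covered by both matchings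
  have hint : ∀ v ∈ W, v ≠ a → v ≠ w → M.f v ≠ v ∧ N.f v ≠ v := by
    intro v hv hva hvw
    obtain ⟨k, hk, rfl⟩ := (hmemW v).1 hv
    have hk0 : 0 < k := by
      rcases Nat.eq_zero_or_pos k with rfl | h
      · exact absurd (seq_zero M N a) hva
      · exact h
    have hks : k < s := by
      rcases Nat.lt_or_ge k s with h | h
      · exact h
      · exfalso
        apply hvw
        rw [← hwdef]
        congr 1
        omega
    obtain ⟨t, rfl⟩ : ∃ t, k = t + 1 := ⟨k - 1, by omega⟩
    have harr2 : seq M N a t ≠ seq M N a (t+1) := fun h => hmin t (by omega) h.symm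
    have hdep2 : seq M N a (t+1+1) ≠ seq M N a (t+1) := hmin (t+1) hks
    by_cases ht : Even t
    · have ht1 : ¬ Even (t+1) := by simp [Nat.even_add_one, ht]
      have harr : N.f (seq M N a (t+1)) = seq M N a t := by
        rw [seq_succ_even M N a ht, N.inv]
      have hdep : M.f (seq M N a (t+1)) = seq M N a (t+1+1) := (seq_succ_odd M N a ht1).symm
      exact ⟨by rw [hdep]; exact hdep2, by rw [harr]; exact harr2⟩
    · have ht1 : Even (t+1) := Nat.even_add_one.mpr ht
      have harr : M.f (seq M N a (t+1)) = seq M N a t := by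
        rw [seq_succ_odd M N a ht, M.inv]
      have hdep : N.f (seq M N a (t+1)) = seq M N a (t+1+1) := (seq_succ_even M N a ht1).symm
      exact ⟨by rw [harr]; exact harr2, by rw [hdep]; exact hdep2⟩
  -- reachability
  have hreach : ∀ k, k ≤ s → G.Reachable a (seq M N a k) := by
    intro k
    induction k with
    | zero => intro _; rw [seq_zero]
    | succ t IHt =>
      intro hts
      refine (IHt (by omega)).trans ?_
      have hne : seq M N a (t+1) ≠ seq M N a t := hmin t (by omega)
      by_cases ht : Even t
      · rw [seq_succ_even M N a ht] at hne ⊢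
        exact (N.adj _ (fun h => hne h)).reachable
      · rw [seq_succ_odd M N a ht] at hne ⊢
        exact (M.adj _ (fun h => hne h)).reachable
  have hWsub : ∀ v ∈ W, v = a ∨ v = w ∨ (M.f v ≠ v ∧ N.f v ≠ v) := by
    intro v hv
    by_cases h1 : v = a
    · exact Or.inl h1
    by_cases h2 : v = w
    · exact Or.inr (Or.inl h2)
    exact Or.inr (Or.inr (hint v hv h1 h2))
  refine ⟨w, flip M N W hMc hNc, flip N M W hNc hMc, hwa, hwdef ▸ hreach s (le_refl _), ?_⟩
  obtain ⟨t, hts⟩ : ∃ t, s = t + 1 := ⟨s - 1, by omega⟩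
  have hwt : seq M N a (t+1) = w := by rw [← hts, hwdef]
  by_cases hse : Even s
  · -- case (ii) : walk ends N-exposed
    have hto : ¬ Even t := Nat.even_add_one.mp (hts ▸ hse)
    have hNw : N.f w = w := by
      rw [← hwdef, ← seq_succ_even M N a hse, hs]
    have hMw : M.f w ≠ w := by
      have harr : M.f w = seq M N a t := by
        rw [← hwt, seq_succ_odd M N a hto, M.inv]
      rw [harr, ← hwt]
      exact fun h => hmin t (by omega) h.symm
    refine Or.inr ⟨hNw, hMw, ?_, ?_⟩
    · rw [flip_supp]
      ext v
      simp only [Set.mem_union, Set.mem_inter_iff, Set.mem_compl_iff, Set.mem_diff,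
        Set.mem_singleton_iff, mem_supp]
      constructor
      · rintro (⟨hvW, hvN⟩ | ⟨hvW, hvM⟩)
        · by_cases hva : v = a
          · right; exact hva
          rcases hWsub v hvW with rfl | rfl | ⟨hM', _⟩
          · exact absurd rfl hva
          · exact absurd hNw hvN
          · left; exact ⟨hM', fun h => hvN (h ▸ hNw)⟩
        · left
          exact ⟨hvM, fun h => hvW (h ▸ hwW)⟩
      · rintro (⟨hvM, hvw⟩ | rfl)
        · by_cases hvW : v ∈ W
          · left
            refine ⟨hvW, ?_⟩
            rcases hWsub v hvW with rfl | rfl | ⟨_, hN'⟩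
            · exact hna
            · exact absurd rfl hvw
            · exact hN'
          · right; exact ⟨hvW, hvM⟩
        · left; exact ⟨haW, hna⟩
    · rw [flip_supp]
      ext v
      simp only [Set.mem_union, Set.mem_inter_iff, Set.mem_compl_iff, Set.mem_diff,
        Set.mem_singleton_iff, mem_supp]
      constructor
      · rintro (⟨hvW, hvM⟩ | ⟨hvW, hvN⟩)
        · by_cases hvw : v = w
          · right; exact hvw
          rcases hWsub v hvW with rfl | rfl | ⟨_, hN'⟩
          · exact absurd ha hvM
          · exact absurd rfl hvw
          · left; exact ⟨hN', fun h => hvM (h ▸ ha)⟩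
        · left
          exact ⟨hvN, fun h => hvW (h ▸ haW)⟩
      · rintro (⟨hvN, hva⟩ | rfl)
        · by_cases hvW : v ∈ W
          · left
            refine ⟨hvW, ?_⟩
            rcases hWsub v hvW with rfl | rfl | ⟨hM', _⟩
            · exact absurd rfl hva
            · exact absurd hNw hvN
            · exact hM'
          · right; exact ⟨hvW, hvN⟩
        · left; exact ⟨hwW, hMw⟩
  · -- case (i) : walk ends M-exposed
    have hte : Even t := by
      rcases Nat.even_or_odd t with h | h
      · exact h
      · exact absurd (hts ▸ (Nat.even_add_one.mpr (Nat.not_even_iff_odd.mpr h))) hse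
    have hMw : M.f w = w := by
      rw [← hwdef, ← seq_succ_odd M N a hse, hs]
    have hNw : N.f w ≠ w := by
      have harr : N.f w = seq M N a t := by
        rw [← hwt, seq_succ_even M N a hte, N.inv]
      rw [harr, ← hwt]
      exact fun h => hmin t (by omega) h.symm
    refine Or.inl ⟨hMw, hNw, ?_, ?_⟩
    · rw [flip_supp]
      ext v
      simp only [Set.mem_union, Set.mem_inter_iff, Set.mem_compl_iff, Set.mem_insert_iff,
        Set.mem_singleton_iff, mem_supp]
      constructor
      · rintro (⟨hvW, hvN⟩ | ⟨hvW, hvM⟩)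
        · rcases hWsub v hvW with rfl | rfl | ⟨hM', _⟩
          · right; left; rfl
          · right; right; rfl
          · left; exact hM'
        · left; exact hvM
      · rintro (hvM | rfl | rfl)
        · by_cases hvW : v ∈ W
          · left
            refine ⟨hvW, ?_⟩
            rcases hWsub v hvW with rfl | rfl | ⟨_, hN'⟩
            · exact absurd ha hvM
            · exact absurd hMw hvM
            · exact hN'
          · right; exact ⟨hvW, hvM⟩
        · left; exact ⟨haW, hna⟩
        · left; exact ⟨hwW, hNw⟩
    · rw [flip_supp]
      ext v
      simp only [Set.mem_union, Set.mem_inter_iff, Set.mem_compl_iff, Set.mem_diff,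
        Set.mem_insert_iff, Set.mem_singleton_iff, mem_supp]
      constructor
      · rintro (⟨hvW, hvM⟩ | ⟨hvW, hvN⟩)
        · rcases hWsub v hvW with rfl | rfl | ⟨_, hN'⟩
          · exact absurd ha hvM
          · exact absurd hMw hvM
          · refine ⟨hN', ?_⟩
            push_neg
            exact ⟨fun h => hvM (h ▸ ha), fun h => hvM (h ▸ hMw)⟩
        · refine ⟨hvN, ?_⟩
          push_neg
          exact ⟨fun h => hvW (h ▸ haW), fun h => hvW (h ▸ hwW)⟩
      · rintro ⟨hvN, hvaw⟩
        push_neg at hvaw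
        by_cases hvW : v ∈ W
        · left
          refine ⟨hvW, ?_⟩
          rcases hWsub v hvW with rfl | rfl | ⟨hM', _⟩
          · exact absurd rfl hvaw.1
          · exact absurd rfl hvaw.2
          · exact hM'
        · right; exact ⟨hvW, hvN⟩

end Walk


/-! ### nu and operations -/

noncomputable def nu (G : SimpleGraph V) : ℕ := sSup {n | ∃ f : IM G, f.supp.ncard = n}

lemma le_nu (f : IM G) : f.supp.ncard ≤ nu G :=
  le_csSup ⟨Fintype.card V, by rintro n ⟨g, rfl⟩; exact supp_ncard_le g⟩ ⟨f, rfl⟩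

lemma exists_nu (G : SimpleGraph V) : ∃ f : IM G, f.supp.ncard = nu G := by
  obtain ⟨f, hf⟩ := exists_isMax G
  refine ⟨f, le_antisymm (le_nu f) ?_⟩
  have : nu G ∈ {n | ∃ f : IM G, f.supp.ncard = n} :=
    Nat.sSup_mem ⟨0, empty G, by simp [supp, empty]⟩
      ⟨Fintype.card V, by rintro n ⟨g, rfl⟩; exact supp_ncard_le g⟩
  obtain ⟨g, hg⟩ := this
  exact hg ▸ hf g

lemma IsMax.ncard_nu {f : IM G} (hf : IsMax f) : f.supp.ncard = nu G := by
  obtain ⟨g, hg⟩ := exists_nu G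
  exact le_antisymm (le_nu f) (hg ▸ hf g)

lemma isMax_of_ncard {f : IM G} (h : f.supp.ncard = nu G) : IsMax f :=
  fun g => h ▸ le_nu g

lemma nu_even (G : SimpleGraph V) : Even (nu G) := by
  obtain ⟨f, hf⟩ := exists_nu G
  exact hf ▸ supp_even f

/-! ### ncard helpers -/

lemma ncard_union_pair {s : Set V} {a b : V} (ha : a ∉ s) (hb : b ∉ s) (hab : a ≠ b) :
    (s ∪ {a, b}).ncard = s.ncard + 2 := by
  have he : s ∪ {a, b} = insert a (insert b s) := by
    ext v; simp only [Set.mem_union, Set.mem_insert_iff, Set.mem_singleton_iff]; tauto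
  rw [he, Set.ncard_insert_of_notMem (by simp [ha, hab]) (Set.toFinite _),
    Set.ncard_insert_of_notMem hb (Set.toFinite _)]

lemma ncard_diff_pair {s : Set V} {a b : V} (ha : a ∈ s) (hb : b ∈ s) (hab : a ≠ b) :
    (s \ {a, b}).ncard + 2 = s.ncard := by
  have hsub : {a, b} ⊆ s := by
    intro x hx; rcases hx with rfl | rfl
    · exact ha
    · exact hb
  rw [Set.ncard_diff hsub (Set.toFinite _), Set.ncard_pair hab]
  have : ({a, b} : Set V).ncard ≤ s.ncard := Set.ncard_le_ncard hsub (Set.toFinite _)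
  rw [Set.ncard_pair hab] at this
  omega

lemma ncard_diff_union_single {s : Set V} {a w : V} (ha : a ∈ s) (hw : w ∉ s) :
    ((s \ {a}) ∪ {w}).ncard = s.ncard := by
  have he : (s \ {a}) ∪ {w} = insert w (s \ {a}) := by
    ext v
    simp only [Set.mem_union, Set.mem_insert_iff, Set.mem_singleton_iff, Set.mem_diff]
    tauto
  rw [he, Set.ncard_insert_of_notMem (by simp [hw]) (Set.toFinite _)]
  rw [Set.ncard_diff_singleton_add_one ha (Set.toFinite _)]

/-! ### operations on matchings -/

/-- Add an edge between two exposed vertices. -/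
noncomputable def addEdge (f : IM G) {a b : V} (hab : G.Adj a b) (hfa : f.f a = a)
    (hfb : f.f b = b) : IM G where
  f v := if v = a then b else if v = b then a else f.f v
  inv := by
    intro v
    dsimp only
    rcases eq_or_ne v a with rfl | hva
    · rw [if_pos rfl]
      rw [if_neg (Ne.symm hab.ne), if_pos rfl]
    · rcases eq_or_ne v b with rfl | hvb
      · rw [if_neg hva, if_pos rfl, if_pos rfl]
      · rw [if_neg hva, if_neg hvb]
        have h1 : f.f v ≠ a := fun h => hva (by rw [← f.inv v, h, hfa])
        have h2 : f.f v ≠ b := fun h => hvb (by rw [← f.inv v, h, hfb])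
        rw [if_neg h1, if_neg h2, f.inv]
  adj := by
    intro v hv
    rcases eq_or_ne v a with rfl | hva
    · rw [if_pos rfl] at hv ⊢
      exact hab
    · rcases eq_or_ne v b with rfl | hvb
      · rw [if_neg hva, if_pos rfl] at hv ⊢
        exact hab.symm
      · rw [if_neg hva, if_neg hvb] at hv ⊢
        exact f.adj v hv

lemma addEdge_supp (f : IM G) {a b : V} (hab : G.Adj a b) (hfa : f.f a = a)
    (hfb : f.f b = b) : (addEdge f hab hfa hfb).supp = f.supp ∪ {a, b} := by
  ext v
  simp only [mem_supp, addEdge, Set.mem_union, Set.mem_insert_iff, Set.mem_singleton_iff]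
  rcases eq_or_ne v a with rfl | hva
  · simp [Ne.symm hab.ne]
  · rcases eq_or_ne v b with rfl | hvb
    · simp [hva, hab.ne]
    · simp [hva, hvb]

/-- Remove the edge at a vertex. -/
noncomputable def removeAt (f : IM G) (a : V) : IM G where
  f v := if v = a ∨ v = f.f a then v else f.f v
  inv := by
    intro v
    dsimp only
    by_cases h : v = a ∨ v = f.f a
    · rw [if_pos h, if_pos h]
    · have h' := h
      push_neg at h'
      have h1 : ¬ (f.f v = a ∨ f.f v = f.f a) := by
        push_neg
        exact ⟨fun hh => h'.2 (by rw [← f.inv v, hh]),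
               fun hh => h'.1 (by rw [← f.inv v, hh, f.inv])⟩
      rw [if_neg h, if_neg h1, f.inv]
  adj := by
    intro v hv
    by_cases h : v = a ∨ v = f.f a
    · rw [if_pos h] at hv
      exact absurd rfl hv
    · rw [if_neg h] at hv ⊢
      exact f.adj v hv

lemma removeAt_supp (f : IM G) (a : V) :
    (removeAt f a).supp = f.supp \ {a, f.f a} := by
  ext v
  simp only [mem_supp, removeAt, Set.mem_diff, Set.mem_insert_iff, Set.mem_singleton_iff]
  by_cases h : v = a ∨ v = f.f a
  · simp [h]
  · push_neg at h
    simp only [if_neg (show ¬ (v = a ∨ v = f.f a) by tauto)]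
    simp [h.1, h.2]

lemma removeAt_avoids (f : IM G) (a : V) :
    ∀ v, (removeAt f a).f v ≠ v → v ≠ a ∧ (removeAt f a).f v ≠ a := by
  intro v hv
  by_cases h : v = a ∨ v = f.f a
  · exfalso
    apply hv
    simp only [removeAt, if_pos h]
  · push_neg at h
    have he : (removeAt f a).f v = f.f v := by simp only [removeAt, if_neg (by tauto : ¬ (v = a ∨ v = f.f a))]
    refine ⟨h.1, ?_⟩
    rw [he]
    intro hh
    exact h.2 (by rw [← f.inv v, hh])

/-! ### vertex deletion -/

/-- Delete all edges at `a`. -/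
def Gm (G : SimpleGraph V) (a : V) : SimpleGraph V where
  Adj x y := G.Adj x y ∧ x ≠ a ∧ y ≠ a
  symm := ⟨by rintro x y ⟨h, h1, h2⟩; exact ⟨h.symm, h2, h1⟩⟩
  loopless := ⟨by rintro x ⟨h, _, _⟩; exact G.irrefl h⟩

lemma Gm_le (G : SimpleGraph V) (a : V) : Gm G a ≤ G := fun _ _ h => h.1

/-- transport along subgraph relation. -/
def ofLE {G G' : SimpleGraph V} (h : G ≤ G') (f : IM G) : IM G' :=
  ⟨f.f, f.inv, fun v hv => h (f.adj v hv)⟩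

@[simp] lemma ofLE_supp {G G' : SimpleGraph V} (h : G ≤ G') (f : IM G) :
    (ofLE h f).supp = f.supp := rfl

@[simp] lemma ofLE_f {G G' : SimpleGraph V} (h : G ≤ G') (f : IM G) :
    (ofLE h f).f = f.f := rfl

/-- a matching avoiding `a` is a matching of `Gm G a`. -/
def toGm (f : IM G) (a : V) (h : ∀ v, f.f v ≠ v → v ≠ a ∧ f.f v ≠ a) : IM (Gm G a) :=
  ⟨f.f, f.inv, fun v hv => ⟨f.adj v hv, (h v hv).1, (h v hv).2⟩⟩

@[simp] lemma toGm_supp (f : IM G) (a : V) (h : ∀ v, f.f v ≠ v → v ≠ a ∧ f.f v ≠ a) :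
    (toGm f a h).supp = f.supp := rfl

lemma Gm_fixes {a : V} (g : IM (Gm G a)) : g.f a = a := by
  by_contra h
  exact (g.adj a h).2.1 rfl


lemma not_mem_supp_iff {f : IM G} {v : V} : v ∉ f.supp ↔ f.f v = v := by
  simp [mem_supp]

/-! ### Stability -/

section Stab

variable {a : V}

lemma nu_Gm_add_two (haA : a ∈ Aset G) : nu (Gm G a) + 2 = nu G := by
  obtain ⟨f, hf⟩ := exists_isMax G
  have hfa : f.f a ≠ a := not_mem_Dset haA.1 hf
  have h1 : a ∈ f.supp := hfa
  have h2 : f.f a ∈ f.supp := f.f_mem_supp h1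
  have hne : a ≠ f.f a := fun h => hfa h.symm
  have hcard : (toGm (removeAt f a) a (removeAt_avoids f a)).supp.ncard + 2 = nu G := by
    rw [toGm_supp, removeAt_supp, ← hf.ncard_nu]
    exact ncard_diff_pair (mem_supp.2 h1) (mem_supp.2 h2) hne
  refine le_antisymm ?_ ?_
  · obtain ⟨g', hg'⟩ := exists_nu (Gm G a)
    have hca : g'.supp.ncard ≤ nu G := le_nu (ofLE (Gm_le G a) g')
    by_contra hcon
    push_neg at hcon
    have hdisj : g'.supp.ncard = nu G ∨ g'.supp.ncard + 1 = nu G := by omega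
    rcases hdisj with h | h
    · have hmax : IsMax (ofLE (Gm_le G a) g') := isMax_of_ncard h
      exact haA.1 (mem_Dset_iff.2 ⟨_, hmax, Gm_fixes g'⟩)
    · obtain ⟨k1, hk1⟩ := nu_even G
      obtain ⟨k2, hk2⟩ := supp_even g'
      omega
  · have := le_nu (toGm (removeAt f a) a (removeAt_avoids f a))
    omega

lemma Dset_subset_Gm (haA : a ∈ Aset G) : Dset G ⊆ Dset (Gm G a) := by
  intro v hv
  obtain ⟨f, hf, hfv⟩ := mem_Dset_iff.1 hv
  have hfa : f.f a ≠ a := not_mem_Dset haA.1 hf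
  have h1 : a ∈ f.supp := hfa
  have h2 : f.f a ∈ f.supp := f.f_mem_supp h1
  have hne : a ≠ f.f a := fun h => hfa h.symm
  set g := toGm (removeAt f a) a (removeAt_avoids f a) with hgdef
  have hcard : g.supp.ncard + 2 = nu G := by
    rw [hgdef, toGm_supp, removeAt_supp, ← hf.ncard_nu]
    exact ncard_diff_pair (mem_supp.2 h1) (mem_supp.2 h2) hne
  have hgmax : IsMax g := by
    apply isMax_of_ncard
    have := nu_Gm_add_two haA
    omega
  refine mem_Dset_iff.2 ⟨g, hgmax, ?_⟩
  rw [← not_mem_supp_iff, hgdef, toGm_supp, removeAt_supp]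
  rw [← not_mem_supp_iff] at hfv
  exact fun hc => hfv hc.1

lemma a_mem_Dset_Gm (G : SimpleGraph V) (a : V) : a ∈ Dset (Gm G a) := by
  obtain ⟨g, hg⟩ := exists_isMax (Gm G a)
  exact mem_Dset_iff.2 ⟨g, hg, Gm_fixes g⟩

lemma Dset_Gm_subset (haA : a ∈ Aset G) : Dset (Gm G a) ⊆ Dset G ∪ {a} := by
  intro v hvD
  by_cases hva : v = a
  · right; exact hva
  left
  obtain ⟨M', hM'max, hM'v⟩ := mem_Dset_iff.1 hvD
  obtain ⟨d, hdD, hadj⟩ := haA.2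
  by_cases hvd : v = d
  · rwa [hvd]
  obtain ⟨N, hNmax, hNd⟩ := mem_Dset_iff.1 hdD
  have hMa : (ofLE (Gm_le G a) M').f a = a := Gm_fixes M'
  have hNa : N.f a ≠ a := not_mem_Dset haA.1 hNmax
  obtain ⟨w, P, Q, hwa, _, hcase⟩ := walk_main (ofLE (Gm_le G a) M') N a hMa hNa
  have hMGcard : (ofLE (Gm_le G a) M').supp.ncard + 2 = nu G := by
    rw [ofLE_supp, hM'max.ncard_nu]
    exact nu_Gm_add_two haA
  have hvM : v ∉ (ofLE (Gm_le G a) M').supp := not_mem_supp_iff.2 hM'v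
  rcases hcase with ⟨hMw, hNw, hPsupp, hQsupp⟩ | ⟨hNw, hMw, hPsupp, hQsupp⟩
  · -- walk ended M-exposed
    by_cases hvw : v = w
    · -- v = w : flip N and add the edge (a, d)
      have haQ : Q.f a = a := by
        rw [← not_mem_supp_iff, hQsupp]
        simp
      have hdQ : Q.f d = d := by
        rw [← not_mem_supp_iff, hQsupp]
        intro hc
        exact (not_mem_supp_iff.2 hNd) hc.1
      have hQcard : Q.supp.ncard + 2 = nu G := by
        rw [hQsupp, ← hNmax.ncard_nu]
        exact ncard_diff_pair (mem_supp.2 hNa) (mem_supp.2 hNw) (Ne.symm hwa)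
      have hRsupp := addEdge_supp Q hadj haQ hdQ
      have hRcard : (addEdge Q hadj haQ hdQ).supp.ncard = nu G := by
        rw [hRsupp, ncard_union_pair (not_mem_supp_iff.2 haQ) (not_mem_supp_iff.2 hdQ)
          hadj.ne]
        omega
      refine mem_Dset_iff.2 ⟨_, isMax_of_ncard hRcard, ?_⟩
      rw [← not_mem_supp_iff, hRsupp]
      intro hc
      rcases hc with hc | hc
      · rw [hQsupp] at hc
        exact (hvw ▸ hc.2) (by simp)
      · rcases hc with hc | hc
        · exact hva hc
        · exact hvd hc
    · -- v ≠ w : P is a maximum matching of G missing v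
      have hPcard : P.supp.ncard = nu G := by
        rw [hPsupp, ncard_union_pair (not_mem_supp_iff.2 hMa)
          (not_mem_supp_iff.2 hMw) (Ne.symm hwa)]
        omega
      refine mem_Dset_iff.2 ⟨P, isMax_of_ncard hPcard, ?_⟩
      rw [← not_mem_supp_iff, hPsupp]
      intro hc
      rcases hc with hc | hc
      · exact hvM hc
      · rcases hc with hc | hc
        · exact hva hc
        · exact hvw hc
  · -- walk ended N-exposed : contradiction, a would be in D(G)
    exfalso
    have hQcard : Q.supp.ncard = nu G := by
      rw [hQsupp, ncard_diff_union_single (s := N.supp) (mem_supp.2 hNa) (not_mem_supp_iff.2 hNw)]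
      exact hNmax.ncard_nu
    apply haA.1
    refine mem_Dset_iff.2 ⟨Q, isMax_of_ncard hQcard, ?_⟩
    rw [← not_mem_supp_iff, hQsupp]
    intro hc
    rcases hc with hc | hc
    · exact hc.2 rfl
    · exact hwa hc.symm

lemma Dset_Gm (haA : a ∈ Aset G) : Dset (Gm G a) = Dset G ∪ {a} := by
  refine le_antisymm (Dset_Gm_subset haA) ?_
  intro v hv
  rcases hv with hv | hv
  · exact Dset_subset_Gm haA hv
  · rw [hv]; exact a_mem_Dset_Gm G a

lemma Aset_Gm (haA : a ∈ Aset G) : Aset (Gm G a) = Aset G \ {a} := by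
  ext x
  constructor
  · rintro ⟨hxD, u, huD, hadj⟩
    have hxa : x ≠ a := by
      intro h
      exact hxD (h ▸ a_mem_Dset_Gm G a)
    have hua : u ≠ a := hadj.2.2
    have huDG : u ∈ Dset G := by
      rcases Dset_Gm_subset haA huD with h | h
      · exact h
      · exact absurd h hua
    refine ⟨⟨?_, u, huDG, hadj.1⟩, hxa⟩
    intro hxDG
    exact hxD (Dset_subset_Gm haA hxDG)
  · rintro ⟨⟨hxD, u, huD, hadj⟩, hxa⟩
    have hxa' : x ≠ a := hxa
    refine ⟨?_, u, Dset_subset_Gm haA huD, hadj, hxa', ?_⟩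
    · intro hc
      rcases Dset_Gm_subset haA hc with h | h
      · exact hxD h
      · exact hxa' h
    · intro h
      rw [h] at huD
      exact haA.1 huD

end Stab


/-! ### Base case: A(G) = ∅ -/

/-- `x` and `y` lie in `D(G)` and in the same component of `G[D(G)]`. -/
def SameD (G : SimpleGraph V) (x y : V) : Prop :=
  ∃ (hx : x ∈ Dset G) (hy : y ∈ Dset G),
    (G.induce (Dset G)).Reachable ⟨x, hx⟩ ⟨y, hy⟩

lemma reachable_induce_of_closed {S : Set V}
    (hS : ∀ x y, x ∈ S → G.Adj x y → y ∈ S) :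
    ∀ {x y : V}, G.Walk x y → ∀ hx : x ∈ S,
      ∃ hy : y ∈ S, (G.induce S).Reachable ⟨x, hx⟩ ⟨y, hy⟩ := by
  intro x y w
  induction w with
  | nil => intro hx; exact ⟨hx, SimpleGraph.Reachable.refl _⟩
  | @cons x u y hadj w ih =>
    intro hx
    have hu : u ∈ S := hS _ _ hx hadj
    obtain ⟨hy, hr⟩ := ih hu
    refine ⟨hy, SimpleGraph.Reachable.trans ?_ hr⟩
    exact SimpleGraph.Adj.reachable (by simpa using hadj)

lemma dset_closed (hA : Aset G = ∅) {x y : V} (hx : x ∈ Dset G) (hadj : G.Adj x y) :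
    y ∈ Dset G := by
  by_contra hy
  have : y ∈ Aset G := ⟨hy, x, hx, hadj.symm⟩
  rw [hA] at this
  exact this

lemma base_aux (hA : Aset G = ∅) (E : Finset V) (hE : ∀ e ∈ E, e ∈ Dset G)
    (hpair : ∀ e ∈ E, ∀ e' ∈ E, e ≠ e' → ¬ SameD G e e') :
    ∀ (k : ℕ) (f : IM G), IsMax f → (E.filter (fun e => f.f e ≠ e)).card ≤ k →
      ∃ g : IM G, IsMax g ∧ ∀ e ∈ E, g.f e = e := by
  intro k
  induction k with
  | zero =>
    intro f hf hcard
    refine ⟨f, hf, fun e he => ?_⟩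
    by_contra h
    have : e ∈ E.filter (fun e => f.f e ≠ e) := Finset.mem_filter.2 ⟨he, h⟩
    have := Finset.card_pos.2 ⟨e, this⟩
    omega
  | succ k IH =>
    intro f hf hcard
    rcases Finset.eq_empty_or_nonempty (E.filter (fun e => f.f e ≠ e)) with hempty | hne
    · refine ⟨f, hf, fun e he => ?_⟩
      by_contra h
      rw [Finset.eq_empty_iff_forall_notMem] at hempty
      exact hempty e (Finset.mem_filter.2 ⟨he, h⟩)
    · obtain ⟨e, hef⟩ := hne
      have heE : e ∈ E := (Finset.mem_filter.1 hef).1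
      have hecov : f.f e ≠ e := (Finset.mem_filter.1 hef).2
      obtain ⟨N, hNmax, hNe⟩ := mem_Dset_iff.1 (hE e heE)
      obtain ⟨w, P, Q, hwe, hreach, hcase⟩ := walk_main N f e hNe hecov
      rcases hcase with ⟨hNw, hfw, hPsupp, hQsupp⟩ | ⟨hfw, hNw, hPsupp, hQsupp⟩
      · exfalso
        have hP : P.supp.ncard = nu G + 2 := by
          rw [hPsupp, ncard_union_pair (not_mem_supp_iff.2 hNe) (not_mem_supp_iff.2 hNw)
            (Ne.symm hwe), hNmax.ncard_nu]
        have := le_nu P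
        omega
      · have hQcard : Q.supp.ncard = nu G := by
          rw [hQsupp, ncard_diff_union_single (mem_supp.2 hecov) (not_mem_supp_iff.2 hfw)]
          exact hf.ncard_nu
        have hQmax := isMax_of_ncard hQcard
        have hsame : SameD G e w := by
          obtain ⟨walk⟩ := hreach
          obtain ⟨hw, hr⟩ := reachable_induce_of_closed
            (fun x y hx hadj => dset_closed hA hx hadj) walk (hE e heE)
          exact ⟨hE e heE, hw, hr⟩
        have hwE : w ∉ E := fun hwEmem =>
          hpair e heE w hwEmem (Ne.symm hwe) hsame
        have hQe : Q.f e = e := by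
          rw [← not_mem_supp_iff, hQsupp]
          intro hc
          rcases hc with hc | hc
          · exact hc.2 rfl
          · exact hwe hc.symm
        have hsub : E.filter (fun e' => Q.f e' ≠ e') ⊆
            (E.filter (fun e' => f.f e' ≠ e')).erase e := by
          intro x hx
          obtain ⟨hxE, hxQ⟩ := Finset.mem_filter.1 hx
          have hxw : x ≠ w := fun h => hwE (h ▸ hxE)
          have hxe : x ≠ e := fun h => hxQ (h ▸ hQe)
          refine Finset.mem_erase.2 ⟨hxe, Finset.mem_filter.2 ⟨hxE, ?_⟩⟩
          have hxs : x ∈ Q.supp := hxQ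
          rw [hQsupp] at hxs
          rcases hxs with h | h
          · exact h.1
          · exact absurd h hxw
        have hcard' : (E.filter (fun e' => Q.f e' ≠ e')).card ≤ k := by
          have h1 := Finset.card_le_card hsub
          have h2 := Finset.card_erase_of_mem hef
          omega
        exact IH Q hQmax hcard'

lemma base (hA : Aset G = ∅) (E : Finset V) (hE : ∀ e ∈ E, e ∈ Dset G)
    (hpair : ∀ e ∈ E, ∀ e' ∈ E, e ≠ e' → ¬ SameD G e e') :
    ∃ g : IM G, IsMax g ∧ ∀ e ∈ E, g.f e = e := by
  obtain ⟨f, hf⟩ := exists_isMax G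
  exact base_aux hA E hE hpair E.card f hf (Finset.card_le_card (Finset.filter_subset _ _))


/-! ### component transfer -/

lemma sameD_refl {x : V} (hx : x ∈ Dset G) : SameD G x x := ⟨hx, hx, .refl _⟩

lemma sameD_symm {x y : V} (h : SameD G x y) : SameD G y x := by
  obtain ⟨hx, hy, hr⟩ := h
  exact ⟨hy, hx, hr.symm⟩

/-- From an induced-subgraph walk to an ambient walk with support control. -/
lemma exists_walk_of_induce_reachable {K : SimpleGraph V} {S : Set V} {x y : S}
    (h : (K.induce S).Reachable x y) :
    ∃ w : K.Walk x.1 y.1, ∀ v ∈ w.support, v ∈ S := by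
  obtain ⟨w⟩ := h
  induction w with
  | nil => exact ⟨SimpleGraph.Walk.nil, by simp⟩
  | @cons u t _ hadj _ ih =>
    obtain ⟨w', hw'⟩ := ih
    refine ⟨SimpleGraph.Walk.cons (by simpa using hadj) w', ?_⟩
    intro v hv
    rw [SimpleGraph.Walk.support_cons] at hv
    rcases List.mem_cons.1 hv with rfl | hv
    · exact u.2
    · exact hw' v hv

/-- From an ambient walk with support in `T ⊆ S` to induced-subgraph reachability,
possibly upgrading the graph. -/
lemma induce_reachable_of_walk {H K : SimpleGraph V} {S T : Set V} (hTS : T ⊆ S)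
    (hup : ∀ u v, H.Adj u v → u ∈ T → v ∈ T → K.Adj u v) :
    ∀ {x y : V} (w : H.Walk x y), (∀ v ∈ w.support, v ∈ T) →
      ∀ (hx : x ∈ T) (hy : y ∈ T),
        (K.induce S).Reachable ⟨x, hTS hx⟩ ⟨y, hTS hy⟩ := by
  intro x y w
  induction w with
  | nil => intro _ _ _; rfl
  | @cons x u y hadj w ih =>
    intro hsupp hx hy
    have hu : u ∈ T := by
      apply hsupp
      rw [SimpleGraph.Walk.support_cons]
      exact List.mem_cons.2 (Or.inr w.start_mem_support)
    refine SimpleGraph.Reachable.trans ?_ (ih (fun v hv => hsupp v ?_) hu hy)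
    · exact SimpleGraph.Adj.reachable (by simpa using hup _ _ hadj hx hu)
    · rw [SimpleGraph.Walk.support_cons]
      exact List.mem_cons.2 (Or.inr hv)

lemma walk_support_adj {H : SimpleGraph V} {x y : V} (w : H.Walk x y) :
    ∀ v ∈ w.support, v = x ∨ ∃ u, H.Adj v u := by
  induction w with
  | nil => intro v hv; left; simpa using hv
  | @cons x u y hadj w ih =>
    intro v hv
    rw [SimpleGraph.Walk.support_cons] at hv
    rcases List.mem_cons.1 hv with rfl | hv
    · left; rfl
    · rcases ih v hv with rfl | h
      · right; exact ⟨x, hadj.symm⟩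
      · right; exact h

lemma sameD_Gm {a : V} (haA : a ∈ Aset G) {x y : V} (hx : x ∈ Dset G) (hy : y ∈ Dset G) :
    SameD (Gm G a) x y ↔ SameD G x y := by
  have hxa : x ≠ a := fun h => haA.1 (h ▸ hx)
  constructor
  · rintro ⟨hx', hy', hr⟩
    obtain ⟨w, hw⟩ := exists_walk_of_induce_reachable hr
    have hwD : ∀ v ∈ w.support, v ∈ Dset G := by
      intro v hv
      have hva : v ≠ a := by
        rcases walk_support_adj w v hv with rfl | ⟨u, hu⟩
        · exact hxa
        · exact fun h => hu.2.1 (h ▸ rfl)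
      have hvm := hw v hv
      rw [Dset_Gm haA] at hvm
      rcases hvm with h | h
      · exact h
      · exact absurd h hva
    have hup : ∀ u v, (Gm G a).Adj u v → u ∈ Dset G → v ∈ Dset G → G.Adj u v :=
      fun u v huv _ _ => huv.1
    exact ⟨hx, hy, induce_reachable_of_walk (subset_refl (Dset G)) hup w hwD hx hy⟩
  · rintro ⟨hx', hy', hr⟩
    obtain ⟨w, hw⟩ := exists_walk_of_induce_reachable hr
    have hup : ∀ u v, G.Adj u v → u ∈ Dset G → v ∈ Dset G → (Gm G a).Adj u v :=
      fun u v huv hu hv => ⟨huv, fun h => haA.1 (h ▸ hu), fun h => haA.1 (h ▸ hv)⟩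
    exact ⟨Dset_subset_Gm haA hx, Dset_subset_Gm haA hy,
      induce_reachable_of_walk (Dset_subset_Gm haA) hup w hw hx hy⟩


lemma addEdge_f_left (f : IM G) {a b : V} (hab : G.Adj a b) (hfa : f.f a = a)
    (hfb : f.f b = b) : (addEdge f hab hfa hfb).f a = b := by
  simp [addEdge]

lemma addEdge_f_of_ne (f : IM G) {a b v : V} (hab : G.Adj a b) (hfa : f.f a = a)
    (hfb : f.f b = b) (hva : v ≠ a) (hvb : v ≠ b) :
    (addEdge f hab hfa hfb).f v = f.f v := by
  simp [addEdge, hva, hvb]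

/-! ### The key lemma -/

lemma key : ∀ (n : ℕ) (G : SimpleGraph V), (Aset G).ncard = n →
    ∀ (dfun : V → V) (E : Finset V),
    (∀ a ∈ Aset G, dfun a ∈ Dset G ∧ G.Adj a (dfun a)) →
    (∀ a ∈ Aset G, ∀ a' ∈ Aset G, a ≠ a' → ¬ SameD G (dfun a) (dfun a')) →
    (∀ e ∈ E, e ∈ Dset G) →
    (∀ e ∈ E, ∀ e' ∈ E, e ≠ e' → ¬ SameD G e e') →
    (∀ e ∈ E, ∀ a ∈ Aset G, ¬ SameD G e (dfun a)) →
    ∃ g : IM G, IsMax g ∧ (∀ a ∈ Aset G, g.f a = dfun a) ∧ (∀ e ∈ E, g.f e = e) := by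
  intro n
  induction n with
  | zero =>
    intro G hn dfun E hd hinj hE hEpair hEd
    have hA : Aset G = ∅ := (Set.ncard_eq_zero (Set.toFinite _)).1 hn
    obtain ⟨g, hg, hge⟩ := base hA E hE hEpair
    exact ⟨g, hg, fun a ha => absurd (hA ▸ ha) (Set.notMem_empty a), hge⟩
  | succ n IH =>
    intro G hn dfun E hd hinj hE hEpair hEd
    have hAne : (Aset G).Nonempty := by
      rw [← Set.ncard_pos (Set.toFinite _)]
      omega
    obtain ⟨a, haA⟩ := hAne
    obtain ⟨hdaD, hdaAdj⟩ := hd a haA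
    have haD : a ∉ Dset G := haA.1
    -- the new exposure demand
    have hdaE : dfun a ∉ E := fun hmem =>
      hEd _ hmem a haA (sameD_refl hdaD)
    -- set up for G - a
    have hA' : Aset (Gm G a) = Aset G \ {a} := Aset_Gm haA
    have hn' : (Aset (Gm G a)).ncard = n := by
      rw [hA', Set.ncard_diff_singleton_of_mem haA, hn]
      omega
    have hsubA : ∀ a' ∈ Aset (Gm G a), a' ∈ Aset G ∧ a' ≠ a := by
      intro a' ha'
      rw [hA'] at ha'
      exact ⟨ha'.1, ha'.2⟩
    obtain ⟨g', hg'max, hg'A, hg'E⟩ := IH (Gm G a) hn' dfun (insert (dfun a) E)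
      (fun a' ha' => by
        obtain ⟨ha'A, ha'a⟩ := hsubA a' ha'
        refine ⟨Dset_subset_Gm haA (hd a' ha'A).1, (hd a' ha'A).2, ha'a, ?_⟩
        intro h
        exact haD (h ▸ (hd a' ha'A).1))
      (fun a' ha' a'' ha'' hne => by
        obtain ⟨ha'A, _⟩ := hsubA a' ha'
        obtain ⟨ha''A, _⟩ := hsubA a'' ha''
        rw [sameD_Gm haA (hd a' ha'A).1 (hd a'' ha''A).1]
        exact hinj a' ha'A a'' ha''A hne)
      (fun e he => by
        rcases Finset.mem_insert.1 he with rfl | he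
        · exact Dset_subset_Gm haA hdaD
        · exact Dset_subset_Gm haA (hE e he))
      (fun e he e' he' hne => by
        rcases Finset.mem_insert.1 he with rfl | he <;>
          rcases Finset.mem_insert.1 he' with rfl | he'
        · exact absurd rfl hne
        · rw [sameD_Gm haA hdaD (hE e' he')]
          exact fun h => hEd e' he' a haA (sameD_symm h)
        · rw [sameD_Gm haA (hE e he) hdaD]
          exact hEd e he a haA
        · rw [sameD_Gm haA (hE e he) (hE e' he')]
          exact hEpair e he e' he' hne)
      (fun e he a' ha' => by
        obtain ⟨ha'A, ha'a⟩ := hsubA a' ha'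
        rcases Finset.mem_insert.1 he with rfl | he
        · rw [sameD_Gm haA hdaD (hd a' ha'A).1]
          exact fun h => hinj a haA a' ha'A (Ne.symm ha'a) h
        · rw [sameD_Gm haA (hE e he) (hd a' ha'A).1]
          exact hEd e he a' ha'A)
    -- now add the edge a - dfun a
    have hga : (ofLE (Gm_le G a) g').f a = a := Gm_fixes g'
    have hgd : (ofLE (Gm_le G a) g').f (dfun a) = dfun a :=
      hg'E (dfun a) (Finset.mem_insert_self _ _)
    set g := addEdge (ofLE (Gm_le G a) g') hdaAdj hga hgd with hgdef
    have hgcard : g.supp.ncard = nu G := by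
      rw [hgdef, addEdge_supp, ncard_union_pair (not_mem_supp_iff.2 hga)
        (not_mem_supp_iff.2 hgd) hdaAdj.ne, ofLE_supp, hg'max.ncard_nu, nu_Gm_add_two haA]
    refine ⟨g, isMax_of_ncard hgcard, ?_, ?_⟩
    · intro a' ha'
      rcases eq_or_ne a' a with rfl | hne
      · rw [hgdef, addEdge_f_left]
      · have ha'A' : a' ∈ Aset (Gm G a) := by
          rw [hA']
          exact ⟨ha', hne⟩
        have h1 : a' ≠ dfun a := fun h => ha'.1 (h ▸ hdaD)
        rw [hgdef, addEdge_f_of_ne _ _ _ _ hne h1]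
        exact hg'A a' ha'A'
    · intro e he
      have h1 : e ≠ a := fun h => haD (h ▸ hE e he)
      have h2 : e ≠ dfun a := fun h => hdaE (h ▸ he)
      rw [hgdef, addEdge_f_of_ne _ _ _ _ h1 h2]
      exact hg'E e (Finset.mem_insert_of_mem he)


end IM

open IM

variable [Fintype (G.induce (Dset G)).ConnectedComponent]

/-- Realize an injective component assignment by a maximum matching. -/
lemma realize (z : {a : V // a ∈ Aset G} → (G.induce (Dset G)).ConnectedComponent)
    (hzinj : Function.Injective z)
    (hzadj : ∀ a : {a : V // a ∈ Aset G}, ∃ d : Dset G,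
      (G.induce (Dset G)).connectedComponentMk d = z a ∧ G.Adj ↑a ↑d) :
    ∃ M : G.Subgraph, IsMaxMatching G M ∧
      ∀ (a : V) (ha : a ∈ Aset G) (c : (G.induce (Dset G)).ConnectedComponent),
        (MatchesInto G M a c ↔ c = z ⟨a, ha⟩) := by
  classical
  set dfun : V → V := fun v =>
    if h : v ∈ Aset G then ((hzadj ⟨v, h⟩).choose : Dset G).val else v with hdfun
  have hdval : ∀ (a : V) (ha : a ∈ Aset G), dfun a = ((hzadj ⟨a, ha⟩).choose : Dset G).val := by
    intro a ha
    simp only [hdfun, dif_pos ha]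
  have hdD : ∀ (a : V) (ha : a ∈ Aset G), dfun a ∈ Dset G := by
    intro a ha
    rw [hdval a ha]
    exact ((hzadj ⟨a, ha⟩).choose : Dset G).2
  have hdcomp : ∀ (a : V) (ha : a ∈ Aset G),
      (G.induce (Dset G)).connectedComponentMk (hzadj ⟨a, ha⟩).choose = z ⟨a, ha⟩ :=
    fun a ha => (hzadj ⟨a, ha⟩).choose_spec.1
  have hdadj : ∀ (a : V) (ha : a ∈ Aset G), G.Adj a (dfun a) := by
    intro a ha
    rw [hdval a ha]
    exact (hzadj ⟨a, ha⟩).choose_spec.2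
  obtain ⟨g, hgmax, hgA, -⟩ := IM.key (Aset G).ncard G rfl dfun ∅
    (fun a ha => ⟨hdD a ha, hdadj a ha⟩)
    (fun a ha a' ha' hne hsame => by
      obtain ⟨hx, hy, hr⟩ := hsame
      have h1 : (⟨dfun a, hx⟩ : Dset G) = (hzadj ⟨a, ha⟩).choose :=
        Subtype.ext (hdval a ha)
      have h2 : (⟨dfun a', hy⟩ : Dset G) = (hzadj ⟨a', ha'⟩).choose :=
        Subtype.ext (hdval a' ha')
      have hcc : z ⟨a, ha⟩ = z ⟨a', ha'⟩ := by
        rw [← hdcomp a ha, ← hdcomp a' ha', ← h1, ← h2]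
        exact SimpleGraph.ConnectedComponent.sound hr
      exact hne (congrArg Subtype.val (hzinj hcc)))
    (fun e he => absurd he (Finset.notMem_empty e))
    (fun e he => absurd he (Finset.notMem_empty e))
    (fun e he => absurd he (Finset.notMem_empty e))
  refine ⟨g.toSub, isMaxMatching_toSub hgmax, ?_⟩
  intro a ha c
  have hfa : g.f a = dfun a := hgA a ha
  constructor
  · rintro ⟨d', hcomp, hadj'⟩
    obtain ⟨hne, heq⟩ := IM.toSub_adj.mp hadj'
    have hdd : d' = (hzadj ⟨a, ha⟩).choose := by
      apply Subtype.ext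
      rw [← heq, hfa, hdval a ha]
    rw [← hcomp, hdd, hdcomp a ha]
  · rintro rfl
    refine ⟨(hzadj ⟨a, ha⟩).choose, hdcomp a ha, IM.toSub_adj.mpr ⟨?_, ?_⟩⟩
    · rw [← hdval a ha]
      exact (hdadj a ha).ne
    · rw [hfa, hdval a ha]


end GE

open Classical in
/-- Any fractional perfect matching on the `A(G)` side of the contracted bipartite
graph `G'` (each `a ∈ A(G)` distributes weight 1 over components of `G[D(G)]` it is
adjacent to, each component receiving total weight at most 1) is realized as the
edge-marginals of a probability distribution over maximum matchings of `G`. -/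
theorem stmt15 {V : Type*} [Fintype V] (G : SimpleGraph V)
    [Fintype (G.induce (Dset G)).ConnectedComponent]
    (p : V → (G.induce (Dset G)).ConnectedComponent → ℝ)
    (hpos : ∀ a z, 0 ≤ p a z)
    (hedge : ∀ a z, p a z ≠ 0 → a ∈ Aset G ∧
      ∃ d : Dset G, (G.induce (Dset G)).connectedComponentMk d = z ∧ G.Adj a ↑d)
    (hrow : ∀ a ∈ Aset G, ∑ z, p a z = 1)
    (hcol : ∀ z, ∑ a, p a z ≤ 1) :
    ∃ (k : ℕ) (M : Fin k → G.Subgraph) (w : Fin k → ℝ),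
      (∀ i, IsMaxMatching G (M i)) ∧ (∀ i, 0 ≤ w i) ∧ (∑ i, w i = 1) ∧
      ∀ a ∈ Aset G, ∀ z,
        (∑ i, if MatchesInto G (M i) a z then w i else 0) = p a z := by
  classical
  set q : Matrix ({a : V // a ∈ Aset G} ⊕ (G.induce (Dset G)).ConnectedComponent)
      ({a : V // a ∈ Aset G} ⊕ (G.induce (Dset G)).ConnectedComponent) ℝ :=
    fun x y => match x, y with
    | .inl _, .inl _ => 0
    | .inl a, .inr z => p ↑a z
    | .inr z, .inl a' => p ↑a' z
    | .inr z, .inr z' => if z = z' then 1 - ∑ a : V, p a z else 0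
    with hqdef
  have hp0 : ∀ (a : V), a ∉ Aset G → ∀ z, p a z = 0 := by
    intro a ha z
    by_contra h
    exact ha (hedge a z h).1
  have hsum : ∀ z, ∑ a' : {a : V // a ∈ Aset G}, p ↑a' z = ∑ a : V, p a z := by
    intro z
    rw [← Finset.sum_subtype (Finset.univ.filter (· ∈ Aset G))
      (by intro x; simp) (fun a => p a z)]
    exact Finset.sum_filter_of_ne (fun a _ h => by by_contra hc; exact h (hp0 a hc z))
  have hq : q ∈ doublyStochastic ℝ
      ({a : V // a ∈ Aset G} ⊕ (G.induce (Dset G)).ConnectedComponent) := by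
    rw [mem_doublyStochastic_iff_sum]
    refine ⟨?_, ?_, ?_⟩
    · rintro (a | z) (a' | z') <;> simp only [hqdef]
      · exact le_refl 0
      · exact hpos _ _
      · exact hpos _ _
      · split
        · have := hcol z
          linarith
        · exact le_refl 0
    · rintro (a | z)
      · rw [Fintype.sum_sum_type]
        simp only [hqdef]
        rw [Finset.sum_const_zero, zero_add]
        exact hrow a a.2
      · rw [Fintype.sum_sum_type]
        simp only [hqdef]
        rw [hsum z, Fintype.sum_ite_eq]
        ring
    · rintro (a | z)
      · rw [Fintype.sum_sum_type]
        simp only [hqdef]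
        rw [Finset.sum_const_zero, zero_add]
        exact hrow a a.2
      · rw [Fintype.sum_sum_type]
        simp only [hqdef]
        rw [hsum z]
        have : ∑ z' : (G.induce (Dset G)).ConnectedComponent,
            (if z' = z then 1 - ∑ a : V, p a z' else 0) = 1 - ∑ a : V, p a z :=
          Fintype.sum_ite_eq' z (fun z' => 1 - ∑ a : V, p a z')
        rw [this]
        ring
  obtain ⟨wt, hwt0, hwt1, hwtq⟩ := exists_eq_sum_perm_of_mem_doublyStochastic hq
  have hentry : ∀ x y, q x y =
      ∑ σ : Equiv.Perm ({a : V // a ∈ Aset G} ⊕ (G.induce (Dset G)).ConnectedComponent),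
        (if σ x = y then wt σ else 0) := by
    intro x y
    have h1 := congrFun (congrFun hwtq x) y
    rw [← h1, Matrix.sum_apply]
    refine Finset.sum_congr rfl fun σ _ => ?_
    rw [Matrix.smul_apply]
    simp [Equiv.Perm.permMatrix, PEquiv.toMatrix_apply, Equiv.toPEquiv_apply, Option.mem_def,
      mul_ite, mul_one, mul_zero, smul_eq_mul, eq_comm]
  have hlb : ∀ (σ : Equiv.Perm ({a : V // a ∈ Aset G} ⊕
      (G.induce (Dset G)).ConnectedComponent)) x y, σ x = y → wt σ ≤ q x y := by
    intro σ x y hxy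
    rw [hentry x y]
    have := Finset.single_le_sum (f := fun σ' => if σ' x = y then wt σ' else 0)
      (fun σ' _ => by split <;> [exact hwt0 σ'; exact le_refl 0]) (Finset.mem_univ σ)
    simpa [hxy] using this
  -- realization for each permutation with positive weight
  have hreal : ∀ σ : Equiv.Perm ({a : V // a ∈ Aset G} ⊕
      (G.induce (Dset G)).ConnectedComponent), wt σ ≠ 0 →
      ∃ M : G.Subgraph, IsMaxMatching G M ∧
        ∀ (a : V) (ha : a ∈ Aset G) (c : (G.induce (Dset G)).ConnectedComponent),
          MatchesInto G M a c ↔ σ (Sum.inl ⟨a, ha⟩) = Sum.inr c := by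
    intro σ hσ
    have hσpos : 0 < wt σ := lt_of_le_of_ne (hwt0 σ) (Ne.symm hσ)
    have hAside : ∀ a : {a : V // a ∈ Aset G},
        ∃ z : (G.induce (Dset G)).ConnectedComponent, σ (Sum.inl a) = Sum.inr z := by
      intro a
      rcases hh : σ (Sum.inl a) with a' | z
      · exfalso
        have := hlb σ (Sum.inl a) (Sum.inl a') hh
        simp only [hqdef] at this
        linarith
      · exact ⟨z, rfl⟩
    choose zf hzf using hAside
    have hzinj : Function.Injective zf := by
      intro a a' h
      have : σ (Sum.inl a) = σ (Sum.inl a') := by rw [hzf a, hzf a', h]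
      exact Sum.inl_injective (σ.injective this)
    have hppos : ∀ a : {a : V // a ∈ Aset G}, p ↑a (zf a) ≠ 0 := by
      intro a
      have := hlb σ (Sum.inl a) (Sum.inr (zf a)) (hzf a)
      simp only [hqdef] at this
      intro h
      rw [h] at this
      linarith
    obtain ⟨M, hMmax, hMchar⟩ := GE.realize (G := G) zf hzinj
      (fun a => (hedge ↑a (zf a) (hppos a)).2)
    refine ⟨M, hMmax, fun a ha c => ?_⟩
    rw [hMchar a ha c, hzf ⟨a, ha⟩]
    constructor
    · rintro rfl; rfl
    · intro h
      exact (Sum.inr_injective h).symm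
  -- index the support of wt
  set S := Finset.univ.filter (fun σ : Equiv.Perm ({a : V // a ∈ Aset G} ⊕
      (G.induce (Dset G)).ConnectedComponent) => wt σ ≠ 0) with hSdef
  set e := S.equivFin with hedef
  have hSmem : ∀ x : S, wt ↑x ≠ 0 := fun x => (Finset.mem_filter.1 x.2).2
  choose Mf hMf1 hMf2 using fun i : Fin S.card => hreal ↑(e.symm i) (hSmem (e.symm i))
  refine ⟨S.card, Mf, fun i => wt ↑(e.symm i), hMf1, fun i => hwt0 _, ?_, ?_⟩
  · rw [Equiv.sum_comp e.symm (fun x : S => wt ↑x), Finset.sum_coe_sort S wt]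
    rw [← hwt1]
    exact Finset.sum_subset (Finset.subset_univ S) (fun σ _ hσ => by
      have : ¬ wt σ ≠ 0 := fun h => hσ (Finset.mem_filter.2 ⟨Finset.mem_univ σ, h⟩)
      push_neg at this
      exact this)
  · intro a ha z
    have h1 : ∀ i : Fin S.card,
        (if MatchesInto G (Mf i) a z then wt ↑(e.symm i) else 0) =
        (if (↑(e.symm i) : Equiv.Perm ({a : V // a ∈ Aset G} ⊕
            (G.induce (Dset G)).ConnectedComponent)) (Sum.inl ⟨a, ha⟩) = Sum.inr z
          then wt ↑(e.symm i) else 0) := by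
      intro i
      rw [if_congr (hMf2 i a ha z) rfl rfl]
    rw [Finset.sum_congr rfl (fun i _ => h1 i)]
    rw [Equiv.sum_comp e.symm (fun x : S =>
      if (↑x : Equiv.Perm ({a : V // a ∈ Aset G} ⊕
          (G.induce (Dset G)).ConnectedComponent)) (Sum.inl ⟨a, ha⟩) = Sum.inr z
        then wt ↑x else 0)]
    rw [Finset.sum_coe_sort S (fun σ => if σ (Sum.inl ⟨a, ha⟩) = Sum.inr z then wt σ else 0)]
    have h2 : ∑ σ ∈ S, (if σ (Sum.inl ⟨a, ha⟩) = Sum.inr z then wt σ else 0) =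
        ∑ σ : Equiv.Perm ({a : V // a ∈ Aset G} ⊕
          (G.induce (Dset G)).ConnectedComponent),
          (if σ (Sum.inl ⟨a, ha⟩) = Sum.inr z then wt σ else 0) := by
      refine Finset.sum_subset (Finset.subset_univ S) (fun σ _ hσ => ?_)
      have : wt σ = 0 := by
        by_contra h
        exact hσ (Finset.mem_filter.2 ⟨Finset.mem_univ σ, h⟩)
      simp [this]
    rw [h2, ← hentry (Sum.inl ⟨a, ha⟩) (Sum.inr z)]
end

section
/- In any graph G, every vertex that is not isolated is covered by at least one maximum-cardinality matching of G. -/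
lemma exists_max_matching {V : Type*} [Fintype V] (G : SimpleGraph V) :
    ∃ M : G.Subgraph, IsMaxMatching G M := by
  classical
  set S : Set ℕ := {n | ∃ N : G.Subgraph, N.IsMatching ∧ N.support.ncard = n} with hS
  have hne : S.Nonempty := ⟨(⊥ : G.Subgraph).support.ncard, ⊥, by
    intro x hx; simp at hx, rfl⟩
  have hbdd : BddAbove S := by
    refine ⟨Fintype.card V, ?_⟩
    rintro n ⟨N, -, rfl⟩
    have := Set.ncard_le_ncard (Set.subset_univ N.support) Set.finite_univ
    simpa [Set.ncard_univ] using this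
  obtain ⟨M, hM, hMcard⟩ := Nat.sSup_mem hne hbdd
  exact ⟨M, hM, fun N hN => hMcard ▸ le_csSup hbdd ⟨N, hN, rfl⟩⟩

lemma isMatching_induce_diff {V : Type*} {G : SimpleGraph V} {M : G.Subgraph}
    (hM : M.IsMatching) {u w : V} (huw : M.Adj u w) :
    (M.induce (M.verts \ {u, w})).IsMatching := by
  intro x hx
  simp only [SimpleGraph.Subgraph.induce_verts, Set.mem_diff, Set.mem_insert_iff,
    Set.mem_singleton_iff, not_or] at hx
  obtain ⟨hxv, hxu, hxw⟩ := hx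
  obtain ⟨y, hy, hyu⟩ := hM hxv
  have hyne : y ≠ u ∧ y ≠ w := by
    constructor
    · rintro rfl
      exact hxw ((hM (M.edge_vert huw)).unique hy.symm huw)
    · rintro rfl
      exact hxu ((hM (M.edge_vert huw.symm)).unique hy.symm huw.symm)
  refine ⟨y, ⟨⟨hxv, by simp [hxu, hxw]⟩, ⟨M.edge_vert hy.symm, by simp [hyne.1, hyne.2]⟩, hy⟩, ?_⟩
  rintro z ⟨-, -, hz⟩
  exact hyu z hz

/-- Every non-isolated vertex of a finite graph is covered by some maximum matching. -/
theorem stmt16 {V : Type*} [Fintype V] (G : SimpleGraph V)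
    (v : V) (hv : ∃ u, G.Adj v u) :
    ∃ M : G.Subgraph, IsMaxMatching G M ∧ v ∈ M.support := by
  classical
  obtain ⟨M, hM, hmax⟩ := exists_max_matching G
  by_cases hvM : v ∈ M.support
  · exact ⟨M, ⟨hM, hmax⟩, hvM⟩
  obtain ⟨u, hadj⟩ := hv
  have hvverts : v ∉ M.verts := by rwa [hM.support_eq_verts] at hvM
  by_cases huM : u ∈ M.support
  · -- u is matched to some w; swap edge uw for vu
    obtain ⟨w, huw⟩ := huM
    have huverts : u ∈ M.verts := M.edge_vert huw
    have hwverts : w ∈ M.verts := M.edge_vert huw.symm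
    have hvu : v ≠ u := fun h => hvverts (h ▸ huverts)
    have hvw : v ≠ w := fun h => hvverts (h ▸ hwverts)
    have hind := isMatching_induce_diff hM huw
    set E := G.subgraphOfAdj hadj with hE
    have hEm : E.IsMatching := SimpleGraph.Subgraph.IsMatching.subgraphOfAdj hadj
    have hdisj : Disjoint (M.induce (M.verts \ {u, w})).support E.support := by
      rw [hind.support_eq_verts, hEm.support_eq_verts]
      simp only [hE, SimpleGraph.subgraphOfAdj_verts, SimpleGraph.Subgraph.induce_verts]
      rw [Set.disjoint_right]
      rintro x (rfl | rfl) hx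
      · exact hvverts hx.1
      · exact hx.2 (Or.inl rfl)
    have hM' : (M.induce (M.verts \ {u, w}) ⊔ E).IsMatching := hind.sup hEm hdisj
    have hverts : (M.induce (M.verts \ {u, w}) ⊔ E).verts = (M.verts \ {u, w}) ∪ {v, u} := by
      simp [hE]
    have hcard : (M.induce (M.verts \ {u, w}) ⊔ E).support.ncard = M.support.ncard := by
      rw [hM'.support_eq_verts, hM.support_eq_verts, hverts]
      have : (M.verts \ {u, w}) ∪ {v, u} = insert v (M.verts \ {w}) := by
        ext x
        simp only [Set.mem_union, Set.mem_diff, Set.mem_insert_iff, Set.mem_singleton_iff, not_or]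
        constructor
        · rintro (⟨hx, h1, h2⟩ | (rfl | rfl))
          · exact Or.inr ⟨hx, h2⟩
          · exact Or.inl rfl
          · exact Or.inr ⟨huverts, fun h => (h ▸ huw).ne rfl⟩
        · rintro (rfl | ⟨hx, h2⟩)
          · exact Or.inr (Or.inl rfl)
          · by_cases hxu : x = u
            · exact Or.inr (Or.inr hxu)
            · exact Or.inl ⟨hx, hxu, h2⟩
      rw [this, Set.ncard_insert_of_notMem (by simp [hvverts]) ((Set.toFinite _).diff), Set.ncard_diff_singleton_of_mem hwverts]
      have : 0 < M.verts.ncard := (Set.ncard_pos (Set.toFinite _)).2 ⟨u, huverts⟩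
      omega
    refine ⟨M.induce (M.verts \ {u, w}) ⊔ E, ⟨hM', fun N hN => hcard ▸ hmax N hN⟩, ?_⟩
    rw [hM'.support_eq_verts, hverts]
    exact Or.inr (Or.inl rfl)
  · -- both v and u unmatched: M ⊔ edge vu is a bigger matching, contradiction
    exfalso
    set E := G.subgraphOfAdj hadj with hE
    have hEm : E.IsMatching := SimpleGraph.Subgraph.IsMatching.subgraphOfAdj hadj
    have huverts : u ∉ M.verts := by rwa [hM.support_eq_verts] at huM
    have hdisj : Disjoint M.support E.support := by
      rw [hM.support_eq_verts, hEm.support_eq_verts]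
      simp only [hE, SimpleGraph.subgraphOfAdj_verts]
      rw [Set.disjoint_right]
      rintro x (rfl | rfl) <;> assumption
    have hM' : (M ⊔ E).IsMatching := hM.sup hEm hdisj
    have := hmax _ hM'
    rw [hM'.support_eq_verts, hM.support_eq_verts] at this
    have hverts : (M ⊔ E).verts = insert v (insert u M.verts) := by
      simp [hE, Set.union_comm, Set.insert_union]
    rw [hverts] at this
    have hfin : M.verts.Finite := Set.finite_univ.subset (Set.subset_univ _)
    rw [Set.ncard_insert_of_notMem (by simp [hvverts, hadj.ne]) (hfin.insert _),
      Set.ncard_insert_of_notMem huverts hfin] at this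
    omega
end

section
/- Let G = (V,E) be a graph, W ≥ max edge weight, and construct H by adding k = 2(ν(G) − μ) + def(G) new vertices each joined to every vertex of V by an edge of weight W, where μ satisfies ν(G)/2 ≤ μ ≤ ν(G) and def(G) = |V| − 2ν(G). Then H has a perfect matching, and the perfect matchings of H of maximum total weight are exactly those that restrict to maximum-weight matchings of G of cardinality μ together with new-vertex edges. -/
/-- A matching of `G`, given as a finite set of edges of `G` that are pairwise
vertex-disjoint. -/
def FMatching {α : Type*} (G : SimpleGraph α) (M : Finset (Sym2 α)) : Prop :=
  (∀ e ∈ M, e ∈ G.edgeSet) ∧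
  (M : Set (Sym2 α)).Pairwise (fun e f => ∀ v, v ∈ e → v ∉ f)

/-- The matching `M` is perfect: every vertex is covered. -/
def FPerfect {α : Type*} (M : Finset (Sym2 α)) : Prop := ∀ v : α, ∃ e ∈ M, v ∈ e

/-- Total weight of a matching. -/
def wsum {α : Type*} (w : Sym2 α → ℝ) (M : Finset (Sym2 α)) : ℝ := ∑ e ∈ M, w e

/-- The graph `H`: `G` together with `k` new vertices, each joined to every
original vertex (and to no new vertex). -/
def Hgraph {α : Type*} (G : SimpleGraph α) (k : ℕ) : SimpleGraph (α ⊕ Fin k) where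
  Adj x y :=
    (∃ a b, x = Sum.inl a ∧ y = Sum.inl b ∧ G.Adj a b) ∨
    (x.isLeft ∧ y.isRight) ∨ (x.isRight ∧ y.isLeft)
  symm := by
    refine ⟨?_⟩
    rintro x y (⟨a, b, rfl, rfl, hab⟩ | ⟨hx, hy⟩ | ⟨hx, hy⟩)
    · exact Or.inl ⟨b, a, rfl, rfl, hab.symm⟩
    · exact Or.inr (Or.inr ⟨hy, hx⟩)
    · exact Or.inr (Or.inl ⟨hy, hx⟩)
  loopless := by
    refine ⟨?_⟩
    rintro x (⟨a, b, rfl, hab, h⟩ | ⟨hx, hy⟩ | ⟨hx, hy⟩)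
    · exact G.loopless.irrefl a (by cases hab; exact h)
    · cases x <;> simp_all
    · cases x <;> simp_all

open Classical in
/-- Weights on edges of `H`: original edges keep the weight `w`, edges meeting a
new vertex have weight `W`. -/
noncomputable def wH {α : Type*} {k : ℕ} (w : Sym2 α → ℝ) (W : ℝ) :
    Sym2 (α ⊕ Fin k) → ℝ := fun e =>
  if h : ∃ a b : α, e = s(Sum.inl a, Sum.inl b) then
    w s(h.choose, h.choose_spec.choose) else W

section Aux
variable {α : Type*}

lemma fmatching_subset {G : SimpleGraph α} {M N : Finset (Sym2 α)}
    (h : FMatching G M) (hs : N ⊆ M) : FMatching G N :=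
  ⟨fun e he => h.1 e (hs he), h.2.mono (by exact_mod_cast hs)⟩

def esupp [DecidableEq α] : Sym2 α → Finset α :=
  Sym2.lift ⟨fun a b => {a, b}, fun a b => Finset.pair_comm a b⟩

@[simp] lemma esupp_pair [DecidableEq α] (a b : α) : esupp s(a, b) = {a, b} := rfl

lemma mem_esupp [DecidableEq α] {x : α} {e : Sym2 α} : x ∈ esupp e ↔ x ∈ e := by
  induction e using Sym2.ind with | _ a b => simp [Sym2.mem_iff]

lemma card_esupp [DecidableEq α] {e : Sym2 α} (he : ¬ e.IsDiag) : (esupp e).card = 2 := by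
  induction e using Sym2.ind with | _ a b =>
    rw [Sym2.mk_isDiag_iff] at he
    simp [Finset.card_pair he]

lemma fmatching_biUnion_card [Fintype α] [DecidableEq α] {G : SimpleGraph α}
    {M : Finset (Sym2 α)} (h : FMatching G M) :
    (M.biUnion esupp).card = 2 * M.card := by
  rw [Finset.card_biUnion]
  · rw [Finset.sum_congr rfl fun e he =>
      card_esupp (SimpleGraph.not_isDiag_of_mem_edgeSet G (h.1 e he))]
    simp [mul_comm]
  · intro e he f hf hne
    rw [Function.onFun, Finset.disjoint_left]
    intro x hx hx'
    exact h.2 he hf hne x (mem_esupp.mp hx) (mem_esupp.mp hx')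

lemma fmatching_two_card_le [Fintype α] [DecidableEq α] {G : SimpleGraph α}
    {M : Finset (Sym2 α)} (h : FMatching G M) : 2 * M.card ≤ Fintype.card α := by
  rw [← fmatching_biUnion_card h, ← Finset.card_univ]
  exact Finset.card_le_card (Finset.subset_univ _)

lemma fperfect_two_card [Fintype α] [DecidableEq α] {G : SimpleGraph α}
    {M : Finset (Sym2 α)} (h : FMatching G M) (hp : FPerfect M) :
    2 * M.card = Fintype.card α := by
  rw [← fmatching_biUnion_card h, ← Finset.card_univ]
  congr 1
  ext x
  simp only [Finset.mem_biUnion, Finset.mem_univ, iff_true]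
  obtain ⟨e, he, hx⟩ := hp x
  exact ⟨e, he, mem_esupp.mpr hx⟩

end Aux

section HAux
variable {α : Type*} {k : ℕ}

lemma sym2_inl_inj : Function.Injective (Sym2.map (Sum.inl : α → α ⊕ Fin k)) :=
  Sym2.map.injective Sum.inl_injective

lemma wH_inl (w : Sym2 α → ℝ) (W : ℝ) (e : Sym2 α) :
    wH (k := k) w W (Sym2.map Sum.inl e) = w e := by
  induction e using Sym2.ind with | _ a b =>
  rw [Sym2.map_pair_eq]
  have h : ∃ a' b' : α, s(Sum.inl a, Sum.inl b) = s((Sum.inl a' : α ⊕ Fin k), Sum.inl b') :=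
    ⟨a, b, rfl⟩
  simp only [wH]
  rw [dif_pos h]
  congr 1
  refine (sym2_inl_inj (k := k) ?_).symm
  rw [Sym2.map_pair_eq, Sym2.map_pair_eq]
  exact h.choose_spec.choose_spec

lemma wH_W (w : Sym2 α → ℝ) (W : ℝ) {e : Sym2 (α ⊕ Fin k)}
    (h : ¬ ∃ a b : α, e = s(Sum.inl a, Sum.inl b)) : wH w W e = W := by
  simp only [wH]
  rw [dif_neg h]

open Classical in
lemma wsum_wH [Fintype α] [DecidableEq α] (w : Sym2 α → ℝ) (W : ℝ)
    {M : Finset (Sym2 (α ⊕ Fin k))} {MG : Finset (Sym2 α)}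
    (hfil : M.filter (fun e => ∃ a b : α, e = s(Sum.inl a, Sum.inl b))
      = MG.image (Sym2.map Sum.inl)) :
    wsum (wH w W) M = wsum w MG +
      ((M.filter (fun e => ¬ ∃ a b : α, e = s(Sum.inl a, Sum.inl b))).card : ℝ) * W := by
  rw [wsum, ← Finset.sum_filter_add_sum_filter_not M
      (fun e => ∃ a b : α, e = s(Sum.inl a, Sum.inl b))]
  congr 1
  · rw [hfil, Finset.sum_image (fun x _ y _ h => sym2_inl_inj h)]
    exact Finset.sum_congr rfl fun e _ => wH_inl w W e
  · rw [Finset.sum_congr rfl (fun e he => wH_W w W (Finset.mem_filter.mp he).2),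
      Finset.sum_const, nsmul_eq_mul]

end HAux

section Decomp
variable {α : Type*} [Fintype α] [DecidableEq α] {k : ℕ} {G : SimpleGraph α}

open Classical in
lemma hgraph_decomp {M : Finset (Sym2 (α ⊕ Fin k))}
    (hM : FMatching (Hgraph G k) M) (hp : FPerfect M) :
    ∃ MG : Finset (Sym2 α), FMatching G MG ∧
      2 * MG.card + k = Fintype.card α ∧
      M.filter (fun e => ∃ a b : α, e = s(Sum.inl a, Sum.inl b))
        = MG.image (Sym2.map Sum.inl) ∧
      (M.filter (fun e => ¬ ∃ a b : α, e = s(Sum.inl a, Sum.inl b))).card = k := by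
  set MG : Finset (Sym2 α) :=
    Finset.univ.filter (fun e : Sym2 α => Sym2.map Sum.inl e ∈ M) with hMGdef
  have hmem : ∀ e : Sym2 α, e ∈ MG ↔ Sym2.map Sum.inl e ∈ M := by
    intro e; simp [hMGdef]
  -- filter equation
  have hfil : M.filter (fun e => ∃ a b : α, e = s(Sum.inl a, Sum.inl b))
      = MG.image (Sym2.map Sum.inl) := by
    ext e
    simp only [Finset.mem_filter, Finset.mem_image]
    constructor
    · rintro ⟨heM, a, b, rfl⟩
      exact ⟨s(a, b), (hmem _).mpr (by rwa [Sym2.map_pair_eq]), by rw [Sym2.map_pair_eq]⟩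
    · rintro ⟨e', he', rfl⟩
      refine ⟨(hmem _).mp he', ?_⟩
      induction e' using Sym2.ind with | _ a b =>
      exact ⟨a, b, by rw [Sym2.map_pair_eq]⟩
  -- MG is a matching of G
  have hMGm : FMatching G MG := by
    constructor
    · intro e he
      induction e using Sym2.ind with | _ a b =>
      have := hM.1 _ ((hmem _).mp he)
      rw [Sym2.map_pair_eq, SimpleGraph.mem_edgeSet] at this
      rw [SimpleGraph.mem_edgeSet]
      rcases this with ⟨a', b', ha, hb, hadj⟩ | ⟨h1, h2⟩ | ⟨h1, h2⟩
      · cases Sum.inl_injective ha; cases Sum.inl_injective hb; exact hadj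
      · simp at h2
      · simp at h1
    · intro e he f hf hne v hv hv'
      have : Sym2.map (Sum.inl : α → α ⊕ Fin k) e ≠ Sym2.map Sum.inl f :=
        fun h => hne (sym2_inl_inj (k := k) h)
      exact hM.2 (Finset.mem_coe.mpr ((hmem _).mp he))
        (Finset.mem_coe.mpr ((hmem _).mp hf)) this (Sum.inl v)
        (Sym2.mem_map.mpr ⟨v, hv, rfl⟩) (Sym2.mem_map.mpr ⟨v, hv', rfl⟩)
  -- every edge of H is original or contains a right vertex
  have hedge : ∀ e ∈ M, (∃ a b : α, e = s(Sum.inl a, Sum.inl b)) ∨ ∃ j : Fin k, Sum.inr j ∈ e := by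
    intro e he
    have := hM.1 e he
    induction e using Sym2.ind with | _ x y =>
    rw [SimpleGraph.mem_edgeSet] at this
    rcases this with ⟨a, b, rfl, rfl, _⟩ | ⟨h1, h2⟩ | ⟨h1, h2⟩
    · exact Or.inl ⟨a, b, rfl⟩
    · obtain ⟨j, rfl⟩ := Sum.isRight_iff.mp h2
      exact Or.inr ⟨j, by simp [Sym2.mem_iff]⟩
    · obtain ⟨j, rfl⟩ := Sum.isRight_iff.mp h1
      exact Or.inr ⟨j, by simp [Sym2.mem_iff]⟩
  -- uniqueness of the edge containing a given vertex
  have huniq : ∀ (v : α ⊕ Fin k) (e e' : Sym2 (α ⊕ Fin k)), e ∈ M → e' ∈ M →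
      v ∈ e → v ∈ e' → e = e' := by
    intro v e e' he he' hv hv'
    by_contra hne
    exact hM.2 (Finset.mem_coe.mpr he) (Finset.mem_coe.mpr he') hne v hv hv'
  -- card of mixed edges = k
  have hmixcard :
      ((Finset.univ : Finset (Fin k)).card =
        (M.filter (fun e => ¬ ∃ a b : α, e = s(Sum.inl a, Sum.inl b))).card) := by
    refine Finset.card_bij (fun j _ => (hp (Sum.inr j)).choose) ?_ ?_ ?_
    · intro j _
      obtain ⟨he, hj⟩ := (hp (Sum.inr j)).choose_spec
      refine Finset.mem_filter.mpr ⟨he, ?_⟩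
      rintro ⟨a, b, hab⟩
      have hab' : (hp (Sum.inr j)).choose = s(Sum.inl a, Sum.inl b) := hab
      rw [hab', Sym2.mem_iff] at hj
      rcases hj with h | h <;> exact absurd h Sum.inr_ne_inl
    · intro j₁ _ j₂ _ heq
      have heq' : (hp (Sum.inr j₁)).choose = (hp (Sum.inr j₂)).choose := heq
      by_contra hne
      obtain ⟨he₁, hj₁⟩ := (hp (Sum.inr j₁)).choose_spec
      obtain ⟨he₂, hj₂⟩ := (hp (Sum.inr j₂)).choose_spec
      rw [← heq'] at hj₂
      have hne' : (Sum.inr j₁ : α ⊕ Fin k) ≠ Sum.inr j₂ := fun h => hne (Sum.inr_injective h)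
      have he := (Sym2.mem_and_mem_iff hne').mp ⟨hj₁, hj₂⟩
      have hE := hM.1 _ he₁
      rw [he, SimpleGraph.mem_edgeSet] at hE
      rcases hE with ⟨a, b, ha, hb, _⟩ | ⟨u1, u2⟩ | ⟨u1, u2⟩ <;> simp_all [Hgraph]
    · intro e he'
      rw [Finset.mem_filter] at he'
      rcases hedge e he'.1 with h | ⟨j, hj⟩
      · exact absurd h he'.2
      · exact ⟨j, Finset.mem_univ j,
          huniq (Sum.inr j) _ e (hp (Sum.inr j)).choose_spec.1 he'.1
            (hp (Sum.inr j)).choose_spec.2 hj⟩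
  rw [Finset.card_univ, Fintype.card_fin] at hmixcard
  -- cardinalities
  have htot : 2 * M.card = Fintype.card α + k := by
    have := fperfect_two_card hM hp
    rwa [Fintype.card_sum, Fintype.card_fin] at this
  have hsplit := Finset.card_filter_add_card_filter_not
    (s := M) (p := fun e => ∃ a b : α, e = s(Sum.inl a, Sum.inl b))
  have hMGcard : MG.card
      = (M.filter (fun e => ∃ a b : α, e = s(Sum.inl a, Sum.inl b))).card := by
    rw [hfil, Finset.card_image_of_injective _ sym2_inl_inj]
  exact ⟨MG, hMGm, by omega, hfil, hmixcard.symm⟩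

end Decomp

section Construct
variable {α : Type*} [Fintype α] [DecidableEq α] {k : ℕ} {G : SimpleGraph α}

open Classical in
lemma hgraph_construct {MG : Finset (Sym2 α)} (hMG : FMatching G MG)
    (hk : 2 * MG.card + k = Fintype.card α) :
    ∃ M : Finset (Sym2 (α ⊕ Fin k)), FMatching (Hgraph G k) M ∧ FPerfect M ∧
      M.filter (fun e => ∃ a b : α, e = s(Sum.inl a, Sum.inl b))
        = MG.image (Sym2.map Sum.inl) ∧
      (M.filter (fun e => ¬ ∃ a b : α, e = s(Sum.inl a, Sum.inl b))).card = k := by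
  set U : Finset α := Finset.univ \ MG.biUnion esupp with hUdef
  have hUmem : ∀ a : α, a ∈ U ↔ ∀ e ∈ MG, a ∉ e := by
    intro a
    simp [hUdef, mem_esupp]
  have hUcard : U.card = k := by
    rw [hUdef, Finset.card_sdiff_of_subset (Finset.subset_univ _), Finset.card_univ,
      fmatching_biUnion_card hMG]
    omega
  set f : (U : Finset α) ≃ Fin k := Finset.equivFinOfCardEq hUcard with hfdef
  set Mx : Finset (Sym2 (α ⊕ Fin k)) :=
    Finset.univ.image (fun j : Fin k => s(Sum.inl ((f.symm j : U) : α), Sum.inr j)) with hMxdef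
  set M : Finset (Sym2 (α ⊕ Fin k)) := MG.image (Sym2.map Sum.inl) ∪ Mx with hMdef
  have hMxmem : ∀ e, e ∈ Mx ↔ ∃ j : Fin k, e = s(Sum.inl ((f.symm j : U) : α), Sum.inr j) := by
    intro e
    simp only [hMxdef, Finset.mem_image, Finset.mem_univ, true_and]
    exact ⟨fun ⟨j, hj⟩ => ⟨j, hj.symm⟩, fun ⟨j, hj⟩ => ⟨j, hj.symm⟩⟩
  have hMmem : ∀ e, e ∈ M ↔ (∃ e' ∈ MG, e = Sym2.map Sum.inl e') ∨
      ∃ j : Fin k, e = s(Sum.inl ((f.symm j : U) : α), Sum.inr j) := by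
    intro e
    rw [hMdef, Finset.mem_union, hMxmem]
    simp only [Finset.mem_image]
    constructor
    · rintro (⟨e', h1, h2⟩ | h)
      exacts [Or.inl ⟨e', h1, h2.symm⟩, Or.inr h]
    · rintro (⟨e', h1, h2⟩ | h)
      exacts [Or.inl ⟨e', h1, h2.symm⟩, Or.inr h]
  -- membership facts
  have hmap_mem : ∀ (e' : Sym2 α) (v : α ⊕ Fin k), v ∈ Sym2.map Sum.inl e' ↔
      ∃ a : α, a ∈ e' ∧ v = Sum.inl a := by
    intro e' v
    rw [Sym2.mem_map]
    exact ⟨fun ⟨a, h1, h2⟩ => ⟨a, h1, h2.symm⟩, fun ⟨a, h1, h2⟩ => ⟨a, h1, h2.symm⟩⟩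
  -- matching
  have hmatch : FMatching (Hgraph G k) M := by
    constructor
    · intro e he
      rcases (hMmem e).mp he with ⟨e', h1, rfl⟩ | ⟨j, rfl⟩
      · induction e' using Sym2.ind with | _ a b =>
        rw [Sym2.map_pair_eq, SimpleGraph.mem_edgeSet]
        exact Or.inl ⟨a, b, rfl, rfl, (SimpleGraph.mem_edgeSet G).mp (hMG.1 _ h1)⟩
      · rw [SimpleGraph.mem_edgeSet]
        exact Or.inr (Or.inl ⟨rfl, rfl⟩)
    · intro e₁ he₁ e₂ he₂ hne v hv₁ hv₂
      rcases (hMmem e₁).mp he₁ with ⟨d₁, hd₁, rfl⟩ | ⟨j₁, rfl⟩ <;>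
        rcases (hMmem e₂).mp he₂ with ⟨d₂, hd₂, rfl⟩ | ⟨j₂, rfl⟩
      · obtain ⟨a, ha, hva⟩ := (hmap_mem d₁ _).mp hv₁
        obtain ⟨b, hb, hvb⟩ := (hmap_mem d₂ _).mp hv₂
        have hab : a = b := Sum.inl_injective (hva.symm.trans hvb)
        subst hab
        have hdne : d₁ ≠ d₂ := fun h => hne (by rw [h])
        exact hMG.2 (Finset.mem_coe.mpr hd₁) (Finset.mem_coe.mpr hd₂) hdne a ha hb
      · obtain ⟨a, ha, hva⟩ := (hmap_mem d₁ _).mp hv₁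
        rw [hva, Sym2.mem_iff] at hv₂
        rcases hv₂ with h | h
        · have haU : a ∈ U := by
            rw [Sum.inl_injective h]
            exact (f.symm j₂).2
          exact (hUmem a).mp haU d₁ hd₁ ha
        · exact absurd h Sum.inl_ne_inr
      · obtain ⟨a, ha, hva⟩ := (hmap_mem d₂ _).mp hv₂
        rw [hva, Sym2.mem_iff] at hv₁
        rcases hv₁ with h | h
        · have haU : a ∈ U := by
            rw [Sum.inl_injective h]
            exact (f.symm j₁).2
          exact (hUmem a).mp haU d₂ hd₂ ha
        · exact absurd h Sum.inl_ne_inr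
      · have hjne : j₁ ≠ j₂ := fun h => hne (by rw [h])
        rw [Sym2.mem_iff] at hv₁ hv₂
        rcases hv₁ with h1 | h1 <;> rcases hv₂ with h2 | h2
        · exact hjne (f.symm.injective (Subtype.coe_injective
            (Sum.inl_injective (h1.symm.trans h2))))
        · exact absurd (h1.symm.trans h2) Sum.inl_ne_inr
        · exact absurd (h1.symm.trans h2) Sum.inr_ne_inl
        · exact hjne (Sum.inr_injective (h1.symm.trans h2))
  -- perfect
  have hperf : FPerfect M := by
    intro v
    rcases v with a | j
    · by_cases ha : a ∈ U
      · refine ⟨s(Sum.inl ((f.symm (f ⟨a, ha⟩) : U) : α), Sum.inr (f ⟨a, ha⟩)),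
          (hMmem _).mpr (Or.inr ⟨f ⟨a, ha⟩, rfl⟩), ?_⟩
        rw [Equiv.symm_apply_apply, Sym2.mem_iff]
        exact Or.inl rfl
      · have : ∃ e ∈ MG, a ∈ e := by
          by_contra h
          push_neg at h
          exact ha ((hUmem a).mpr h)
        obtain ⟨e, he, hae⟩ := this
        exact ⟨Sym2.map Sum.inl e, (hMmem _).mpr (Or.inl ⟨e, he, rfl⟩),
          Sym2.mem_map.mpr ⟨a, hae, rfl⟩⟩
    · exact ⟨s(Sum.inl ((f.symm j : U) : α), Sum.inr j),
        (hMmem _).mpr (Or.inr ⟨j, rfl⟩), by rw [Sym2.mem_iff]; exact Or.inr rfl⟩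
  -- the two filter facts
  have hMGall : ∀ e ∈ MG.image (Sym2.map (Sum.inl : α → α ⊕ Fin k)),
      ∃ a b : α, e = s(Sum.inl a, Sum.inl b) := by
    intro e he
    obtain ⟨e', _, rfl⟩ := Finset.mem_image.mp he
    induction e' using Sym2.ind with | _ a b =>
    exact ⟨a, b, by rw [Sym2.map_pair_eq]⟩
  have hMxnone : ∀ e ∈ Mx, ¬ ∃ a b : α, e = s(Sum.inl a, Sum.inl b) := by
    intro e he
    obtain ⟨j, rfl⟩ := (hMxmem e).mp he
    rintro ⟨a, b, hab⟩
    rw [Sym2.eq_iff] at hab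
    rcases hab with ⟨_, h⟩ | ⟨_, h⟩ <;> exact absurd h Sum.inr_ne_inl
  have hfil : M.filter (fun e => ∃ a b : α, e = s(Sum.inl a, Sum.inl b))
      = MG.image (Sym2.map Sum.inl) := by
    rw [hMdef, Finset.filter_union, Finset.filter_true_of_mem hMGall,
      Finset.filter_false_of_mem hMxnone, Finset.union_empty]
  have hfil' : M.filter (fun e => ¬ ∃ a b : α, e = s(Sum.inl a, Sum.inl b)) = Mx := by
    rw [hMdef, Finset.filter_union,
      Finset.filter_false_of_mem (fun e he h => h (hMGall e he)),
      Finset.filter_true_of_mem hMxnone, Finset.empty_union]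
  have hMxcard : Mx.card = k := by
    rw [hMxdef, Finset.card_image_of_injective, Finset.card_univ, Fintype.card_fin]
    intro j₁ j₂ h
    rw [Sym2.eq_iff] at h
    rcases h with ⟨_, h⟩ | ⟨h, _⟩
    · exact Sum.inr_injective h
    · exact absurd h Sum.inl_ne_inr
  exact ⟨M, hmatch, hperf, hfil, by rw [hfil', hMxcard]⟩

end Construct

open Classical in
/-- Adding `k = 2(ν(G) − μ) + def(G)` universal new vertices (with edge weight
`W ≥` every original edge weight) yields a graph `H` with a perfect matching, and
the maximum-weight perfect matchings of `H` are exactly those whose restriction to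
`G` is a maximum-weight matching of `G` among matchings of cardinality `μ`. -/
theorem stmt17 {α : Type*} [Fintype α] [DecidableEq α] (G : SimpleGraph α)
    (w : Sym2 α → ℝ) (W : ℝ) (hW : ∀ e ∈ G.edgeSet, w e ≤ W)
    (ν μ : ℕ)
    (hν₁ : ∃ M, FMatching G M ∧ M.card = ν)
    (hν₂ : ∀ M, FMatching G M → M.card ≤ ν)
    (hμ₁ : ν ≤ 2 * μ) (hμ₂ : μ ≤ ν) :
    (∃ M, FMatching (Hgraph G (2 * (ν - μ) + (Fintype.card α - 2 * ν))) M ∧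
      FPerfect M) ∧
    (∀ M, FMatching (Hgraph G (2 * (ν - μ) + (Fintype.card α - 2 * ν))) M →
      FPerfect M →
      ((∀ M', FMatching (Hgraph G (2 * (ν - μ) + (Fintype.card α - 2 * ν))) M' →
          FPerfect M' → wsum (wH w W) M' ≤ wsum (wH w W) M) ↔
        ∃ MG : Finset (Sym2 α), FMatching G MG ∧ MG.card = μ ∧
          (∀ M', FMatching G M' → M'.card = μ → wsum w M' ≤ wsum w MG) ∧
          M.filter (fun e => ∃ a b : α, e = s(Sum.inl a, Sum.inl b))
            = MG.image (Sym2.map Sum.inl))) := by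
  obtain ⟨Mν, hMν, hcν⟩ := hν₁
  have hνle : 2 * ν ≤ Fintype.card α := by
    have := fmatching_two_card_le hMν
    omega
  set k := 2 * (ν - μ) + (Fintype.card α - 2 * ν) with hkdef
  have hk2 : ∀ n : ℕ, n = μ → 2 * n + k = Fintype.card α := by intro n h; omega
  refine ⟨?_, ?_⟩
  · obtain ⟨MG0, hsub, hc0⟩ := Finset.exists_subset_card_eq (s := Mν) (n := μ) (by omega)
    obtain ⟨M, h1, h2, _, _⟩ := hgraph_construct (fmatching_subset hMν hsub) (hk2 _ hc0)
    exact ⟨M, h1, h2⟩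
  · intro M hM hp
    obtain ⟨MG, hMG, hcard, hfil, hknum⟩ := hgraph_decomp hM hp
    have hMGcard : MG.card = μ := by omega
    have hwM : wsum (wH w W) M = wsum w MG + (k : ℝ) * W := by
      rw [wsum_wH w W hfil, hknum]
    constructor
    · intro hmax
      refine ⟨MG, hMG, hMGcard, ?_, hfil⟩
      intro M' hM' hc'
      obtain ⟨M'', h1, h2, h3, h4⟩ := hgraph_construct hM' (hk2 _ hc')
      have hle := hmax M'' h1 h2
      rw [hwM, wsum_wH w W h3, h4] at hle
      linarith
    · rintro ⟨MG', h1, h2, h3, h4⟩ M' hM' hp'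
      have hMGeq : MG' = MG :=
        Finset.image_injective sym2_inl_inj (h4.symm.trans hfil)
      obtain ⟨MG₁, g1, gcard, gfil, gknum⟩ := hgraph_decomp hM' hp'
      have hg : MG₁.card = μ := by omega
      have hle := h3 MG₁ g1 hg
      rw [hwM, wsum_wH w W gfil, gknum, ← hMGeq]
      linarith
end
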